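/- arXiv:1908.01513 — 5 statements merged into one kernel-verified Lean document; each statement's English description precedes it below -/
import Mathlib

section
/- Let K ∈ ℝ, N ∈ (1,∞), let I ⊂ ℝ be a closed interval, and let F be a nonempty family of CD(K,N) densities each of whose support equals I. Then the pointwise infimum g(x) := inf_{f ∈ F} f(x) is continuous on I and satisfies g^{1/(N−1)}((1−t)x₀ + t·x₁) ≥ σ^{(1−t)}_{K,N−1}(|x₁−x₀|)·g^{1/(N−1)}(x₀) + σ^{(t)}_{K,N−1}(|x₁−x₀|)·g^{1/(N−1)}(x₁) for all x₀, x₁ ∈ I and all t ∈ (0,1); in particular, g is a CD(K,N) density. -/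
open MeasureTheory Filter Set

noncomputable def sOf (κ θ : ℝ) : ℝ :=
  if 0 < κ then Real.sin (Real.sqrt κ * θ) / Real.sqrt κ
  else if κ = 0 then θ
  else Real.sinh (Real.sqrt (-κ) * θ) / Real.sqrt (-κ)

noncomputable def sigmaCoeff (K N t θ : ℝ) : ENNReal :=
  if Real.pi ^ 2 * (N - 1) ≤ K * θ ^ 2 then ⊤
  else if θ = 0 then ENNReal.ofReal t
  else ENNReal.ofReal (sOf (K / (N - 1)) (t * θ) / sOf (K / (N - 1)) θ)

noncomputable def densSupport (h : ℝ → ℝ) : Set ℝ :=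
  {x : ℝ | ∀ U : Set ℝ, IsOpen U → x ∈ U →
    0 < (volume.withDensity fun y => ENNReal.ofReal (h y)) U}

def IsQCDDensity (Q K N : ℝ) (h : ℝ → ℝ) : Prop :=
  (∀ x, 0 ≤ h x) ∧ ContinuousOn h (densSupport h) ∧
  ∀ x₀ ∈ densSupport h, ∀ x₁ ∈ densSupport h, ∀ t ∈ Set.Ioo (0:ℝ) 1,
    ENNReal.ofReal (Q ^ (-(1 / (N - 1)))) *
        (sigmaCoeff K N (1 - t) (|x₁ - x₀|) * ENNReal.ofReal (h x₀ ^ (1 / (N - 1))) +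
          sigmaCoeff K N t (|x₁ - x₀|) * ENNReal.ofReal (h x₁ ^ (1 / (N - 1)))) ≤
      ENNReal.ofReal (h ((1 - t) * x₀ + t * x₁) ^ (1 / (N - 1)))

def IsCDDensity (K N : ℝ) (h : ℝ → ℝ) : Prop := IsQCDDensity 1 K N h

lemma sOf_pos {κ θ : ℝ} (hθ : 0 < θ) (h : κ * θ ^ 2 < Real.pi ^ 2) : 0 < sOf κ θ := by
  unfold sOf
  split_ifs with h1 h2
  · apply div_pos _ (Real.sqrt_pos.2 h1)
    apply Real.sin_pos_of_pos_of_lt_pi (by positivity)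
    have he : Real.sqrt κ * θ = Real.sqrt (κ * θ ^ 2) := by
      rw [Real.sqrt_mul h1.le, Real.sqrt_sq hθ.le]
    rw [he]
    calc Real.sqrt (κ * θ ^ 2) < Real.sqrt (Real.pi ^ 2) :=
          Real.sqrt_lt_sqrt (mul_nonneg h1.le (sq_nonneg θ)) h
      _ = Real.pi := Real.sqrt_sq Real.pi_pos.le
  · exact hθ
  · push_neg at h1
    have hκ : κ < 0 := lt_of_le_of_ne h1 h2
    apply div_pos (Real.sinh_pos_iff.2 _) (Real.sqrt_pos.2 (by linarith))
    exact mul_pos (Real.sqrt_pos.2 (by linarith)) hθ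

lemma sOf_continuous (κ : ℝ) : Continuous (sOf κ) := by
  unfold sOf
  split_ifs with h1 h2
  · exact (Real.continuous_sin.comp (continuous_const.mul continuous_id)).div_const _
  · exact continuous_id
  · exact (Real.continuous_sinh.comp (continuous_const.mul continuous_id)).div_const _

lemma kappa_sq_lt {K N θ : ℝ} (hN : 1 < N) (hθ : K * θ ^ 2 < Real.pi ^ 2 * (N - 1)) :
    K / (N - 1) * θ ^ 2 < Real.pi ^ 2 := by
  have hN1 : 0 < N - 1 := by linarith
  rw [div_mul_eq_mul_div, div_lt_iff₀ hN1]
  linarith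

lemma key_bound (K N : ℝ) (hN : 1 < N) (I : Set ℝ) (g : ℝ → ℝ)
    (hg0 : ∀ x, 0 ≤ g x)
    (hmain : ∀ x₀ ∈ I, ∀ x₁ ∈ I, ∀ t ∈ Set.Ioo (0:ℝ) 1,
      sigmaCoeff K N (1 - t) (|x₁ - x₀|) * ENNReal.ofReal (g x₀ ^ (1 / (N - 1))) +
        sigmaCoeff K N t (|x₁ - x₀|) * ENNReal.ofReal (g x₁ ^ (1 / (N - 1))) ≤
      ENNReal.ofReal (g ((1 - t) * x₀ + t * x₁) ^ (1 / (N - 1))))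
    (x b y : ℝ) (hx : x ∈ I) (hb : b ∈ I)
    (ht : (y - x) / (b - x) ∈ Set.Ioo (0:ℝ) 1)
    (hθ : K * |b - x| ^ 2 < Real.pi ^ 2 * (N - 1)) :
    (sOf (K / (N - 1)) (|b - y|) / sOf (K / (N - 1)) (|b - x|) * g x ^ (1 / (N - 1)))
      ^ (N - 1) ≤ g y := by
  have hN1 : 0 < N - 1 := by linarith
  have hp : (0:ℝ) < 1 / (N - 1) := by positivity
  set p := 1 / (N - 1) with hpdef
  set t := (y - x) / (b - x) with htdef
  obtain ⟨ht0, ht1⟩ := ht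
  have hbx : b - x ≠ 0 := by
    intro h
    rw [htdef, h, div_zero] at ht0
    exact lt_irrefl _ ht0
  have hcancel : t * (b - x) = y - x := div_mul_cancel₀ _ hbx
  have hy : (1 - t) * x + t * b = y := by nlinarith [hcancel]
  have hby : b - y = (1 - t) * (b - x) := by nlinarith [hcancel]
  have habs : |b - y| = (1 - t) * |b - x| := by
    rw [hby, abs_mul, abs_of_pos (by linarith : (0:ℝ) < 1 - t)]
  have hθpos : 0 < |b - x| := abs_pos.2 hbx
  set κ := K / (N - 1) with hκdef
  have hκθ : κ * |b - x| ^ 2 < Real.pi ^ 2 := kappa_sq_lt hN hθ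
  have hκθ' : κ * ((1 - t) * |b - x|) ^ 2 < Real.pi ^ 2 := by
    rcases le_or_gt κ 0 with hκ | hκ
    · have h0 : κ * ((1 - t) * |b - x|) ^ 2 ≤ 0 :=
        mul_nonpos_of_nonpos_of_nonneg hκ (sq_nonneg _)
      have hπ : (0:ℝ) < Real.pi ^ 2 := by positivity
      linarith
    · nlinarith [mul_pos (mul_pos hκ (mul_pos ht0 (show (0:ℝ) < 2 - t by linarith)))
        (mul_pos hθpos hθpos)]
  have hsb : 0 < sOf κ (|b - x|) := sOf_pos hθpos hκθ
  have hsy : 0 < sOf κ ((1 - t) * |b - x|) :=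
    sOf_pos (mul_pos (by linarith) hθpos) hκθ'
  have hsσ : sigmaCoeff K N (1 - t) (|b - x|) =
      ENNReal.ofReal (sOf κ ((1 - t) * |b - x|) / sOf κ (|b - x|)) := by
    rw [sigmaCoeff, if_neg (not_le.2 hθ), if_neg hθpos.ne']
  have hmm := hmain x hx b hb t ⟨ht0, ht1⟩
  rw [hy, hsσ] at hmm
  have h1 : ENNReal.ofReal (sOf κ ((1 - t) * |b - x|) / sOf κ (|b - x|)) *
      ENNReal.ofReal (g x ^ p) ≤ ENNReal.ofReal (g y ^ p) :=
    le_trans le_self_add hmm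
  set c := sOf κ ((1 - t) * |b - x|) / sOf κ (|b - x|) with hcdef
  have hc : 0 < c := div_pos hsy hsb
  rw [← ENNReal.ofReal_mul hc.le] at h1
  have h2 : c * g x ^ p ≤ g y ^ p :=
    (ENNReal.ofReal_le_ofReal_iff (Real.rpow_nonneg (hg0 y) p)).1 h1
  have h3 : (c * g x ^ p) ^ (N - 1) ≤ (g y ^ p) ^ (N - 1) :=
    Real.rpow_le_rpow (mul_nonneg hc.le (Real.rpow_nonneg (hg0 x) p)) h2 hN1.le
  have h4 : (g y ^ p) ^ (N - 1) = g y := by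
    rw [← Real.rpow_mul (hg0 y)]
    have hpq : p * (N - 1) = 1 := by
      rw [hpdef]; field_simp
    rw [hpq, Real.rpow_one]
  rw [habs]
  rw [h4] at h3
  exact h3

lemma aux_main (K N : ℝ) (hN : 1 < N)
    (I : Set ℝ) (hIord : I.OrdConnected)
    (S : Set (ℝ → ℝ)) (hS : S.Nonempty)
    (hall : ∀ f ∈ S, IsCDDensity K N f ∧ densSupport f = I)
    (g : ℝ → ℝ)
    (hg0 : ∀ x, 0 ≤ g x)
    (hgle : ∀ f : S, ∀ x, g x ≤ f.1 x)
    (hglt : ∀ x a, g x < a → ∃ f : S, f.1 x < a) :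
    ContinuousOn g I ∧
    (∀ x₀ ∈ I, ∀ x₁ ∈ I, ∀ t ∈ Set.Ioo (0:ℝ) 1,
      sigmaCoeff K N (1 - t) (|x₁ - x₀|) * ENNReal.ofReal (g x₀ ^ (1 / (N - 1))) +
        sigmaCoeff K N t (|x₁ - x₀|) * ENNReal.ofReal (g x₁ ^ (1 / (N - 1))) ≤
      ENNReal.ofReal (g ((1 - t) * x₀ + t * x₁) ^ (1 / (N - 1)))) ∧
    IsCDDensity K N g := by
  have hN1 : 0 < N - 1 := by linarith
  have hp : (0:ℝ) < 1 / (N - 1) := by positivity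
  set p := 1 / (N - 1) with hpdef
  set κ := K / (N - 1) with hκdef
  -- Part 2: the interpolation inequality for g
  have hmain2 : ∀ x₀ ∈ I, ∀ x₁ ∈ I, ∀ t ∈ Set.Ioo (0:ℝ) 1,
      sigmaCoeff K N (1 - t) (|x₁ - x₀|) * ENNReal.ofReal (g x₀ ^ p) +
        sigmaCoeff K N t (|x₁ - x₀|) * ENNReal.ofReal (g x₁ ^ p) ≤
      ENNReal.ofReal (g ((1 - t) * x₀ + t * x₁) ^ p) := by
    intro x₀ hx₀ x₁ hx₁ t ht
    set y := (1 - t) * x₀ + t * x₁ with hydef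
    have hstep : ∀ f : S,
        sigmaCoeff K N (1 - t) (|x₁ - x₀|) * ENNReal.ofReal (g x₀ ^ p) +
          sigmaCoeff K N t (|x₁ - x₀|) * ENNReal.ofReal (g x₁ ^ p) ≤
        ENNReal.ofReal (f.1 y ^ p) := by
      intro f
      obtain ⟨⟨hf0, hfc, hfin⟩, hfs⟩ := hall f.1 f.2
      have h := hfin x₀ (hfs ▸ hx₀) x₁ (hfs ▸ hx₁) t ht
      rw [Real.one_rpow, ENNReal.ofReal_one, one_mul] at h
      refine le_trans (add_le_add ?_ ?_) h
      · exact mul_le_mul_right (ENNReal.ofReal_le_ofReal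
          (Real.rpow_le_rpow (hg0 x₀) (hgle f x₀) hp.le)) _
      · exact mul_le_mul_right (ENNReal.ofReal_le_ofReal
          (Real.rpow_le_rpow (hg0 x₁) (hgle f x₁) hp.le)) _
    have tend : Tendsto (fun ε : ℝ => ENNReal.ofReal ((g y + ε) ^ p)) (nhdsWithin 0 (Ioi 0))
        (nhds (ENNReal.ofReal (g y ^ p))) := by
      have h1 : Tendsto (fun ε : ℝ => g y + ε) (nhdsWithin 0 (Ioi 0)) (nhds (g y)) := by
        have h2 : Tendsto (fun ε : ℝ => g y + ε) (nhds 0) (nhds (g y + 0)) :=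
          (continuous_const.add continuous_id).tendsto 0
        rw [add_zero] at h2
        exact h2.mono_left nhdsWithin_le_nhds
      have h2 : ContinuousAt (fun r : ℝ => ENNReal.ofReal (r ^ p)) (g y) :=
        ENNReal.continuous_ofReal.continuousAt.comp
          (Real.continuousAt_rpow_const _ _ (Or.inr hp.le))
      exact h2.tendsto.comp h1
    refine ge_of_tendsto tend ?_
    filter_upwards [self_mem_nhdsWithin] with ε hε
    obtain ⟨f, hf⟩ := hglt y (g y + ε) (by linarith [mem_Ioi.1 hε])
    refine le_trans (hstep f) (ENNReal.ofReal_le_ofReal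
      (Real.rpow_le_rpow ((hall f.1 f.2).1.1 y) hf.le hp.le))
  -- a uniform smallness scale θ₀
  obtain ⟨θ₀, hθ₀pos, hθ₀⟩ : ∃ θ₀ : ℝ, 0 < θ₀ ∧
      ∀ θ : ℝ, 0 ≤ θ → θ ≤ θ₀ → K * θ ^ 2 < Real.pi ^ 2 * (N - 1) := by
    rcases le_or_gt K 0 with hK | hK
    · refine ⟨1, one_pos, fun θ h0 h1 => ?_⟩
      have := mul_nonpos_of_nonpos_of_nonneg hK (sq_nonneg θ)
      have hπ : (0:ℝ) < Real.pi ^ 2 * (N - 1) := by positivity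
      linarith
    · refine ⟨Real.sqrt (Real.pi ^ 2 * (N - 1) / (2 * K)), Real.sqrt_pos.2 (by positivity),
        fun θ h0 h1 => ?_⟩
      have harg : (0:ℝ) ≤ Real.pi ^ 2 * (N - 1) / (2 * K) := by positivity
      have hsq := Real.sq_sqrt harg
      have h2 : θ ^ 2 ≤ Real.pi ^ 2 * (N - 1) / (2 * K) := by
        nlinarith [Real.sqrt_nonneg (Real.pi ^ 2 * (N - 1) / (2 * K))]
      have hπ : (0:ℝ) < Real.pi ^ 2 * (N - 1) := by positivity
      have h3 : K * θ ^ 2 ≤ K * (Real.pi ^ 2 * (N - 1) / (2 * K)) :=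
        mul_le_mul_of_nonneg_left h2 hK.le
      have h4 : K * (Real.pi ^ 2 * (N - 1) / (2 * K)) = Real.pi ^ 2 * (N - 1) / 2 := by
        field_simp
      rw [h4] at h3
      linarith
  -- Part 1: continuity
  have hcont : ContinuousOn g I := by
    intro x hx
    refine tendsto_order.2 ⟨?_, ?_⟩
    · -- lower semicontinuity
      intro a ha
      rcases lt_or_ge a 0 with ha0 | ha0
      · exact Filter.Eventually.of_forall fun y => lt_of_lt_of_le ha0 (hg0 y)
      · -- uses the interpolation inequality
        have hside : ∀ b : ℝ, b ∈ I → b ≠ x →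
            K * |b - x| ^ 2 < Real.pi ^ 2 * (N - 1) →
            ∀ᶠ y in nhds x,
              a < (sOf κ (|b - y|) / sOf κ (|b - x|) * g x ^ p) ^ (N - 1) := by
          intro b hb hbne hθ
          have hθpos : 0 < |b - x| := abs_pos.2 (sub_ne_zero.2 hbne)
          have hsb : 0 < sOf κ (|b - x|) := sOf_pos hθpos (kappa_sq_lt hN hθ)
          have hcont2 : ContinuousAt
              (fun y => (sOf κ (|b - y|) / sOf κ (|b - x|) * g x ^ p) ^ (N - 1)) x := by
            apply ContinuousAt.rpow_const _ (Or.inr (by linarith))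
            exact ((((sOf_continuous κ).comp
              ((continuous_const.sub continuous_id).abs)).div_const _).mul
              continuous_const).continuousAt
          have hval : (sOf κ (|b - x|) / sOf κ (|b - x|) * g x ^ p) ^ (N - 1) = g x := by
            rw [div_self hsb.ne', one_mul, ← Real.rpow_mul (hg0 x)]
            rw [show p * (N - 1) = 1 by rw [hpdef]; field_simp, Real.rpow_one]
          have htd := hcont2.tendsto
          rw [hval] at htd
          exact htd.eventually_const_lt ha
        have hsplit : nhdsWithin x I ≤
            nhdsWithin x (I ∩ Iio x) ⊔ (nhdsWithin x {x} ⊔ nhdsWithin x (I ∩ Ioi x)) := by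
          rw [← nhdsWithin_union, ← nhdsWithin_union]
          apply nhdsWithin_mono
          intro y hy
          rcases lt_trichotomy y x with h | h | h
          · exact Or.inl ⟨hy, h⟩
          · exact Or.inr (Or.inl h)
          · exact Or.inr (Or.inr ⟨hy, h⟩)
        refine Filter.Eventually.filter_mono hsplit ?_
        rw [eventually_sup, eventually_sup]
        refine ⟨?_, ?_, ?_⟩
        · -- left side
          rcases eq_empty_or_nonempty (I ∩ Iio x) with he | ⟨z₀, hz₀I, hz₀⟩
          · rw [he, nhdsWithin_empty]; simp
          · set b := max z₀ (x - θ₀) with hbdef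
            have hxb : b < x := max_lt hz₀ (by linarith)
            have hbI : b ∈ I := hIord.out hz₀I hx ⟨le_max_left _ _, hxb.le⟩
            have habs : |b - x| ≤ θ₀ := by
              rw [abs_of_neg (by linarith)]
              have := le_max_right z₀ (x - θ₀)
              linarith
            have hθb : K * |b - x| ^ 2 < Real.pi ^ 2 * (N - 1) :=
              hθ₀ _ (abs_nonneg _) habs
            have e2 : ∀ᶠ y in nhdsWithin x (I ∩ Iio x), b < y :=
              Filter.Eventually.filter_mono nhdsWithin_le_nhds
                (eventually_gt_nhds hxb)
            have e3 : ∀ᶠ y in nhdsWithin x (I ∩ Iio x),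
                a < (sOf κ (|b - y|) / sOf κ (|b - x|) * g x ^ p) ^ (N - 1) :=
              Filter.Eventually.filter_mono nhdsWithin_le_nhds
                (hside b hbI hxb.ne hθb)
            filter_upwards [self_mem_nhdsWithin, e2, e3] with y hy hby hφ
            obtain ⟨hyI, hyx⟩ := hy
            have htmem : (y - x) / (b - x) ∈ Set.Ioo (0:ℝ) 1 := by
              have h1 : (y - x) / (b - x) = (x - y) / (x - b) := by
                rw [← neg_div_neg_eq]; ring_nf
              rw [h1]
              constructor
              · exact div_pos (by linarith [mem_Iio.1 hyx]) (by linarith)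
              · rw [div_lt_one (by linarith)]; linarith
            have hk := key_bound K N hN I g hg0 hmain2 x b y hx hbI htmem hθb
            exact lt_of_lt_of_le hφ hk
        · -- center
          filter_upwards [self_mem_nhdsWithin] with y hy
          rw [mem_singleton_iff.1 hy]
          exact ha
        · -- right side
          rcases eq_empty_or_nonempty (I ∩ Ioi x) with he | ⟨z₀, hz₀I, hz₀⟩
          · rw [he, nhdsWithin_empty]; simp
          · set b := min z₀ (x + θ₀) with hbdef
            have hxb : x < b := lt_min hz₀ (by linarith)
            have hbI : b ∈ I := hIord.out hx hz₀I ⟨hxb.le, min_le_left _ _⟩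
            have habs : |b - x| ≤ θ₀ := by
              rw [abs_of_pos (by linarith)]
              have := min_le_right z₀ (x + θ₀)
              linarith
            have hθb : K * |b - x| ^ 2 < Real.pi ^ 2 * (N - 1) :=
              hθ₀ _ (abs_nonneg _) habs
            have e2 : ∀ᶠ y in nhdsWithin x (I ∩ Ioi x), y < b :=
              Filter.Eventually.filter_mono nhdsWithin_le_nhds
                (eventually_lt_nhds hxb)
            have e3 : ∀ᶠ y in nhdsWithin x (I ∩ Ioi x),
                a < (sOf κ (|b - y|) / sOf κ (|b - x|) * g x ^ p) ^ (N - 1) :=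
              Filter.Eventually.filter_mono nhdsWithin_le_nhds
                (hside b hbI hxb.ne' hθb)
            filter_upwards [self_mem_nhdsWithin, e2, e3] with y hy hby hφ
            obtain ⟨hyI, hyx⟩ := hy
            have htmem : (y - x) / (b - x) ∈ Set.Ioo (0:ℝ) 1 := by
              constructor
              · exact div_pos (by linarith [mem_Ioi.1 hyx]) (by linarith)
              · rw [div_lt_one (by linarith)]; linarith
            have hk := key_bound K N hN I g hg0 hmain2 x b y hx hbI htmem hθb
            exact lt_of_lt_of_le hφ hk
    · -- upper semicontinuity
      intro a ha
      obtain ⟨f, hf⟩ := hglt x a ha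
      have hfc : ContinuousWithinAt f.1 I x := by
        have h := (hall f.1 f.2).1.2.1
        rw [(hall f.1 f.2).2] at h
        exact h x hx
      have ev := Filter.Tendsto.eventually_lt_const hf hfc
      filter_upwards [ev] with y hy
      exact lt_of_le_of_lt (hgle f y) hy
  -- Part 3
  have hsub : densSupport g ⊆ I := by
    obtain ⟨f, hfS⟩ := hS
    intro z hz
    rw [← (hall f hfS).2]
    intro U hU hzU
    refine lt_of_lt_of_le (hz U hU hzU) ?_
    have hm : (volume.withDensity fun y => ENNReal.ofReal (g y)) ≤
        volume.withDensity fun y => ENNReal.ofReal (f y) :=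
      withDensity_mono (Filter.Eventually.of_forall fun y =>
        ENNReal.ofReal_le_ofReal (hgle ⟨f, hfS⟩ y))
    exact hm U
  refine ⟨hcont, hmain2, hg0, hcont.mono hsub, ?_⟩
  intro x₀ hx₀ x₁ hx₁ t ht
  rw [Real.one_rpow, ENNReal.ofReal_one, one_mul]
  exact hmain2 x₀ (hsub hx₀) x₁ (hsub hx₁) t ht

/-- The pointwise infimum of a nonempty family of `CD(K,N)` densities
with common support a closed interval `I` is continuous on `I`, satisfies the `CD(K,N)`
interpolation inequality on `I`, and is itself a `CD(K,N)` density. -/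
theorem inf_of_cd_densities_is_cd_density (K N : ℝ) (hN : 1 < N)
    (I : Set ℝ) (hIc : IsClosed I) (hIord : I.OrdConnected)
    (S : Set (ℝ → ℝ)) (hS : S.Nonempty)
    (hall : ∀ f ∈ S, IsCDDensity K N f ∧ densSupport f = I) :
    ContinuousOn (fun x => ⨅ f : S, f.1 x) I ∧
    (∀ x₀ ∈ I, ∀ x₁ ∈ I, ∀ t ∈ Set.Ioo (0:ℝ) 1,
      sigmaCoeff K N (1 - t) (|x₁ - x₀|) *
          ENNReal.ofReal ((⨅ f : S, f.1 x₀) ^ (1 / (N - 1))) +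
        sigmaCoeff K N t (|x₁ - x₀|) *
          ENNReal.ofReal ((⨅ f : S, f.1 x₁) ^ (1 / (N - 1))) ≤
      ENNReal.ofReal ((⨅ f : S, f.1 ((1 - t) * x₀ + t * x₁)) ^ (1 / (N - 1)))) ∧
    IsCDDensity K N (fun x => ⨅ f : S, f.1 x) := by
  haveI : Nonempty ↥S := hS.to_subtype
  have hBdd : ∀ x : ℝ, BddBelow (Set.range fun f : S => f.1 x) := by
    intro x
    refine ⟨0, ?_⟩
    rintro r ⟨f, rfl⟩
    exact (hall f.1 f.2).1.1 x
  have hg0 : ∀ x, 0 ≤ ⨅ f : S, f.1 x := fun x =>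
    Real.iInf_nonneg fun f => (hall f.1 f.2).1.1 x
  have hgle : ∀ (f : S) (x : ℝ), (⨅ f : S, f.1 x) ≤ f.1 x := fun f x =>
    ciInf_le (hBdd x) f
  have hglt : ∀ x a : ℝ, (⨅ f : S, f.1 x) < a → ∃ f : S, f.1 x < a := fun x a h =>
    exists_lt_of_ciInf_lt h
  exact aux_main K N hN I hIord S hS hall (fun x => ⨅ f : S, f.1 x) hg0 hgle hglt
end

section
/- Let K ∈ ℝ, N ∈ (1,∞) and let h be an MCP(K,N) density. Then: (i) supp h is a closed interval; (ii) h is bounded above on every compact subset of supp h; (iii) h is positive and locally Lipschitz on the interior of supp h; (iv) there exists a function h̃ : ℝ → [0,∞), agreeing with h everywhere except possibly at the (at most two) endpoints of supp h, such that h̃ is continuous on supp h. -/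
open MeasureTheory Filter Set

def IsMCPDensity (K N : ℝ) (h : ℝ → ℝ) : Prop :=
  (∀ x, 0 ≤ h x) ∧ MeasureTheory.LocallyIntegrable h volume ∧
  ∀ x₀ ∈ densSupport h, ∀ x₁ ∈ densSupport h, ∀ t ∈ Set.Icc (0:ℝ) 1,
    sigmaCoeff K N (1 - t) (|x₁ - x₀|) ^ (N - 1) * ENNReal.ofReal (h x₀) ≤
      ENNReal.ofReal (h ((1 - t) * x₀ + t * x₁))

namespace MCPaux

lemma sOf_zero (κ : ℝ) : sOf κ 0 = 0 := by 
  unfold sOf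
  split_ifs <;> simp


lemma sOf_nonneg {κ θ : ℝ} (h0 : 0 ≤ θ) (hg : κ * θ ^ 2 < Real.pi ^ 2) : 0 ≤ sOf κ θ := by 
  unfold sOf
  split_ifs with h1 h2
  · have hs : 0 < Real.sqrt κ := Real.sqrt_pos.2 h1
    have hsq : Real.sqrt κ * θ * (Real.sqrt κ * θ) = κ * θ ^ 2 := by
      have := Real.sq_sqrt h1.le
      nlinarith [this]
    have hle : Real.sqrt κ * θ ≤ Real.pi := by
      nlinarith [Real.pi_pos, mul_nonneg hs.le h0]
    exact div_nonneg (Real.sin_nonneg_of_nonneg_of_le_pi (mul_nonneg hs.le h0) hle) hs.le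
  · exact h0
  · have hk : 0 < -κ := by
      have : κ < 0 := lt_of_le_of_ne (not_lt.1 h1) h2
      linarith
    have hs : 0 < Real.sqrt (-κ) := Real.sqrt_pos.2 hk
    have : 0 ≤ Real.sinh (Real.sqrt (-κ) * θ) := by
      rw [← Real.sinh_zero]
      exact Real.sinh_le_sinh.2 (mul_nonneg hs.le h0)
    exact div_nonneg this hs.le


lemma sOf_pos {κ θ : ℝ} (h0 : 0 < θ) (hg : κ * θ ^ 2 < Real.pi ^ 2) : 0 < sOf κ θ := by 
  unfold sOf
  split_ifs with h1 h2
  · have hs : 0 < Real.sqrt κ := Real.sqrt_pos.2 h1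
    have hsq : Real.sqrt κ * θ * (Real.sqrt κ * θ) = κ * θ ^ 2 := by
      have := Real.sq_sqrt h1.le
      nlinarith [this]
    have hlt : Real.sqrt κ * θ < Real.pi := by
      nlinarith [Real.pi_pos, mul_pos hs h0]
    exact div_pos (Real.sin_pos_of_pos_of_lt_pi (mul_pos hs h0) hlt) hs
  · exact h0
  · have hk : 0 < -κ := by
      have : κ < 0 := lt_of_le_of_ne (not_lt.1 h1) h2
      linarith
    have hs : 0 < Real.sqrt (-κ) := Real.sqrt_pos.2 hk
    have : 0 < Real.sinh (Real.sqrt (-κ) * θ) := by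
      rw [← Real.sinh_zero]
      exact Real.sinh_lt_sinh.2 (mul_pos hs h0)
    exact div_pos this hs


lemma sOf_continuous (κ : ℝ) : Continuous (sOf κ) := by 
  unfold sOf
  split_ifs with h1 h2
  · exact (Real.continuous_sin.comp (continuous_const.mul continuous_id)).div_const _
  · exact continuous_id
  · exact (Real.continuous_sinh.comp (continuous_const.mul continuous_id)).div_const _


lemma good_mono {κ θ θ' : ℝ} (h0 : 0 ≤ θ') (hle : θ' ≤ θ) (hg : κ * θ ^ 2 < Real.pi ^ 2) :
    κ * θ' ^ 2 < Real.pi ^ 2 := by 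
  rcases le_or_gt κ 0 with hk | hk
  · nlinarith [Real.pi_pos]
  · have h2 : θ' ^ 2 ≤ θ ^ 2 := by nlinarith
    nlinarith


lemma sOf_dist_le (κ D : ℝ) : ∃ C : ℝ, 0 ≤ C ∧
    ∀ a ∈ Icc (0:ℝ) D, ∀ b ∈ Icc (0:ℝ) D, |sOf κ a - sOf κ b| ≤ C * |a - b| := by 
  rcases lt_trichotomy 0 κ with h1 | h1 | h1
  · refine ⟨1, zero_le_one, fun a ha b hb => ?_⟩
    have hs : 0 < Real.sqrt κ := Real.sqrt_pos.2 h1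
    have hfun : sOf κ = fun θ => Real.sin (Real.sqrt κ * θ) / Real.sqrt κ := by
      unfold sOf; simp [h1]
    rw [hfun]
    have hd : ∀ x ∈ Icc (0:ℝ) D,
        HasDerivWithinAt (fun θ => Real.sin (Real.sqrt κ * θ) / Real.sqrt κ)
          (Real.cos (Real.sqrt κ * x)) (Icc 0 D) x := by
      intro x _
      have h2 : HasDerivAt (fun θ : ℝ => Real.sqrt κ * θ) (Real.sqrt κ) x := by
        simpa using (hasDerivAt_id x).const_mul (Real.sqrt κ)
      have h3 : HasDerivAt (fun θ => Real.sin (Real.sqrt κ * θ))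
          (Real.cos (Real.sqrt κ * x) * Real.sqrt κ) x :=
        (Real.hasDerivAt_sin (Real.sqrt κ * x)).comp x h2
      have h4 := h3.div_const (Real.sqrt κ)
      have : Real.cos (Real.sqrt κ * x) * Real.sqrt κ / Real.sqrt κ
          = Real.cos (Real.sqrt κ * x) := by field_simp
      rw [this] at h4
      exact h4.hasDerivWithinAt
    have := (convex_Icc (0:ℝ) D).norm_image_sub_le_of_norm_hasDerivWithin_le hd
      (fun x _ => by rw [Real.norm_eq_abs]; exact Real.abs_cos_le_one _) hb ha
    simpa [Real.norm_eq_abs] using this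
  · refine ⟨1, zero_le_one, fun a ha b hb => ?_⟩
    have hfun : sOf κ = fun θ => θ := by unfold sOf; simp [h1.symm]
    rw [hfun]; simp
  · set c := Real.sqrt (-κ) with hc
    have hk : 0 < -κ := by linarith
    have hs : 0 < c := Real.sqrt_pos.2 hk
    refine ⟨Real.cosh (c * D), (Real.cosh_pos _).le, fun a ha b hb => ?_⟩
    have hfun : sOf κ = fun θ => Real.sinh (c * θ) / c := by
      unfold sOf
      have : ¬ (0 < κ) := by linarith
      have h2 : κ ≠ 0 := by linarith
      simp [this, h2, hc]
    rw [hfun]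
    have hd : ∀ x ∈ Icc (0:ℝ) D,
        HasDerivWithinAt (fun θ => Real.sinh (c * θ) / c) (Real.cosh (c * x)) (Icc 0 D) x := by
      intro x _
      have h2 : HasDerivAt (fun θ : ℝ => c * θ) c x := by
        simpa using (hasDerivAt_id x).const_mul c
      have h3 : HasDerivAt (fun θ => Real.sinh (c * θ)) (Real.cosh (c * x) * c) x :=
        (Real.hasDerivAt_sinh (c * x)).comp x h2
      have h4 := h3.div_const c
      have : Real.cosh (c * x) * c / c = Real.cosh (c * x) := by field_simp
      rw [this] at h4
      exact h4.hasDerivWithinAt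
    have hbd : ∀ x ∈ Icc (0:ℝ) D, ‖Real.cosh (c * x)‖ ≤ Real.cosh (c * D) := by
      intro x hx
      rw [Real.norm_eq_abs, abs_of_pos (Real.cosh_pos _)]
      refine Real.cosh_le_cosh.2 ?_
      rw [abs_of_nonneg (mul_nonneg hs.le hx.1), abs_of_nonneg
        (mul_nonneg hs.le (hx.1.trans hx.2))]
      exact mul_le_mul_of_nonneg_left hx.2 hs.le
    have := (convex_Icc (0:ℝ) D).norm_image_sub_le_of_norm_hasDerivWithin_le hd hbd hb ha
    simpa [Real.norm_eq_abs] using this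


lemma rpow_dist_le {m₁ m₂ : ℝ} (p : ℝ) (hm : 0 < m₁) : ∃ C : ℝ, 0 ≤ C ∧
    ∀ a ∈ Icc m₁ m₂, ∀ b ∈ Icc m₁ m₂, |a ^ p - b ^ p| ≤ C * |a - b| := by 
  refine ⟨|p| * max (m₁ ^ (p - 1)) (m₂ ^ (p - 1)),
    mul_nonneg (abs_nonneg _) (le_trans (Real.rpow_nonneg hm.le _) (le_max_left _ _)),
    fun a ha b hb => ?_⟩
  have hd : ∀ x ∈ Icc m₁ m₂,
      HasDerivWithinAt (fun y : ℝ => y ^ p) (p * x ^ (p - 1)) (Icc m₁ m₂) x := by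
    intro x hx
    exact (Real.hasDerivAt_rpow_const (Or.inl (by linarith [hx.1] : x ≠ 0))).hasDerivWithinAt
  have hbd : ∀ x ∈ Icc m₁ m₂, ‖p * x ^ (p - 1)‖ ≤ |p| * max (m₁ ^ (p - 1)) (m₂ ^ (p - 1)) := by
    intro x hx
    have hxpos : 0 < x := lt_of_lt_of_le hm hx.1
    rw [Real.norm_eq_abs, abs_mul, abs_of_nonneg (Real.rpow_nonneg hxpos.le _)]
    refine mul_le_mul_of_nonneg_left ?_ (abs_nonneg _)
    rcases le_or_gt 0 (p - 1) with hp | hp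
    · exact le_trans (Real.rpow_le_rpow hxpos.le hx.2 hp) (le_max_right _ _)
    · exact le_trans (Real.rpow_le_rpow_of_nonpos hm hx.1 hp.le) (le_max_left _ _)
  have := (convex_Icc m₁ m₂).norm_image_sub_le_of_norm_hasDerivWithin_le hd hbd hb ha
  simpa [Real.norm_eq_abs] using this


variable {K N : ℝ} {h : ℝ → ℝ}

lemma densSupport_closed (h : ℝ → ℝ) : IsClosed (densSupport h) := by 
  rw [← isOpen_compl_iff, isOpen_iff_forall_mem_open]
  intro x hx
  simp only [mem_compl_iff, densSupport, mem_setOf_eq] at hx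
  push_neg at hx
  obtain ⟨U, hU, hxU, hμU⟩ := hx
  refine ⟨U, fun y hy => ?_, hU, hxU⟩
  simp only [mem_compl_iff, densSupport, mem_setOf_eq]
  push_neg
  exact ⟨U, hU, hy, hμU⟩


set_option maxHeartbeats 1000000 in
lemma measure_compl_densSupport (h : ℝ → ℝ) :
    (volume.withDensity fun y => ENNReal.ofReal (h y)) (densSupport h)ᶜ = 0 := by 
  set μ := volume.withDensity fun y => ENNReal.ofReal (h y) with hμ
  have main : (densSupport h)ᶜ ⊆
      ⋃ pq ∈ {pq : ℚ × ℚ | μ (Ioo (pq.1 : ℝ) (pq.2 : ℝ)) = 0}, Ioo (pq.1 : ℝ) (pq.2 : ℝ) := by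
    intro x hx
    simp only [mem_compl_iff, densSupport, mem_setOf_eq] at hx
    push_neg at hx
    obtain ⟨U, hU, hxU, hμU⟩ := hx
    rw [le_zero_iff] at hμU
    obtain ⟨ε, hε, hball⟩ := Metric.isOpen_iff.1 hU x hxU
    obtain ⟨p, hp1, hp2⟩ := exists_rat_btwn (show x - ε < x by linarith)
    obtain ⟨q, hq1, hq2⟩ := exists_rat_btwn (show x < x + ε by linarith)
    have hsub : Ioo (p : ℝ) (q : ℝ) ⊆ U := by
      intro y hy
      apply hball
      rw [Metric.mem_ball, Real.dist_eq, abs_lt]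
      constructor
      · linarith [hy.1]
      · linarith [hy.2]
    have hz : μ (Ioo (p : ℝ) (q : ℝ)) = 0 := measure_mono_null hsub hμU
    have hmem : (p, q) ∈ {pq : ℚ × ℚ | μ (Ioo (pq.1 : ℝ) (pq.2 : ℝ)) = 0} := hz
    exact mem_biUnion hmem ⟨hp2, hq1⟩
  refine measure_mono_null main ?_
  exact (measure_biUnion_null_iff (Set.to_countable _)).2 (fun pq hpq => hpq)


lemma exists_pos_near (hh : IsMCPDensity K N h) {x ε : ℝ} (hx : x ∈ densSupport h)
    (hε : 0 < ε) : ∃ x₀ ∈ densSupport h, |x₀ - x| < ε ∧ 0 < h x₀ := by 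
  set μ := volume.withDensity fun y => ENNReal.ofReal (h y) with hμ
  have hmeas : AEMeasurable h volume := hh.2.1.aestronglyMeasurable.aemeasurable
  set g := hmeas.mk h with hg
  have hgm : Measurable g := hmeas.measurable_mk
  have hge : h =ᵐ[volume] g := hmeas.ae_eq_mk
  have hac : μ ≪ volume := withDensity_absolutelyContinuous _ _
  set bad := (densSupport h)ᶜ ∪ ({y | g y ≤ 0} ∪ {y | h y ≠ g y}) with hbad
  have h1 : μ (densSupport h)ᶜ = 0 := measure_compl_densSupport h
  have h2 : μ {y | g y ≤ 0} = 0 := by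
    have hA : MeasurableSet {y | g y ≤ 0} := hgm measurableSet_Iic
    rw [hμ, withDensity_apply _ hA]
    have e1 : ∫⁻ y in {y | g y ≤ 0}, ENNReal.ofReal (h y) ∂volume
        = ∫⁻ y in {y | g y ≤ 0}, ENNReal.ofReal (g y) ∂volume := by
      apply lintegral_congr_ae
      exact ae_restrict_of_ae (hge.mono fun y hy => by simp [hy])
    rw [e1]
    have e2 : ∫⁻ y in {y | g y ≤ 0}, ENNReal.ofReal (g y) ∂volume
        = ∫⁻ y in {y | g y ≤ 0}, (0 : ENNReal) ∂volume := by
      apply setLIntegral_congr_fun hA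
      exact fun y hy => by simpa using ENNReal.ofReal_eq_zero.2 (show g y ≤ 0 from hy)
    rw [e2]
    simp
  have h3 : μ {y | h y ≠ g y} = 0 := hac (hge)
  have hb : μ bad = 0 := by
    rw [hbad]
    refine measure_union_null h1 (measure_union_null h2 h3)
  have hpos : 0 < μ (Metric.ball x ε) := hx _ Metric.isOpen_ball (Metric.mem_ball_self hε)
  have hns : ¬ Metric.ball x ε ⊆ bad := by
    intro hsub
    have := measure_mono (μ := μ) hsub
    rw [hb] at this
    exact absurd (le_antisymm this (zero_le)) (ne_of_gt hpos)
  obtain ⟨x₀, hx₀b, hx₀bad⟩ := Set.not_subset.1 hns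
  simp only [hbad, mem_union, mem_compl_iff, mem_setOf_eq, not_or, not_not, not_le] at hx₀bad
  refine ⟨x₀, hx₀bad.1, ?_, ?_⟩
  · rw [Metric.mem_ball, Real.dist_eq] at hx₀b
    exact hx₀b
  · rw [hx₀bad.2.2]
    exact hx₀bad.2.1


lemma mcp_key (hN : 1 < N) (hh : IsMCPDensity K N h) {x₀ x₁ t : ℝ}
    (h0 : x₀ ∈ densSupport h) (h1 : x₁ ∈ densSupport h) (ht : t ∈ Icc (0:ℝ) 1)
    (hpos : 0 < h x₀) :
    K / (N - 1) * |x₁ - x₀| ^ 2 < Real.pi ^ 2 ∧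
      sOf (K / (N - 1)) ((1 - t) * |x₁ - x₀|) ^ (N - 1) * h x₀ ≤
        sOf (K / (N - 1)) (|x₁ - x₀|) ^ (N - 1) * h ((1 - t) * x₀ + t * x₁) := by 
  have hN1 : (0:ℝ) < N - 1 := by linarith
  have key := hh.2.2 x₀ h0 x₁ h1 t ht
  set θ := |x₁ - x₀| with hθ
  have hθ0 : 0 ≤ θ := abs_nonneg _
  have hng : ¬ (Real.pi ^ 2 * (N - 1) ≤ K * θ ^ 2) := by
    intro hge
    have hσ : sigmaCoeff K N (1 - t) θ = ⊤ := by rw [sigmaCoeff, if_pos hge]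
    rw [hσ, ENNReal.top_rpow_of_pos (by linarith), ENNReal.top_mul
      (ENNReal.ofReal_pos.2 hpos).ne'] at key
    exact ENNReal.ofReal_ne_top (top_le_iff.1 key)
  have hgood : K / (N - 1) * θ ^ 2 < Real.pi ^ 2 := by
    rw [not_le] at hng
    rw [div_mul_eq_mul_div, div_lt_iff₀ hN1]
    linarith
  refine ⟨hgood, ?_⟩
  rcases eq_or_ne θ 0 with hz | hz
  · rw [hz]
    simp [sOf_zero, Real.zero_rpow (ne_of_gt hN1)]
  · have hθpos : 0 < θ := lt_of_le_of_ne hθ0 (Ne.symm hz)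
    have hsθ : 0 < sOf (K/(N-1)) θ := sOf_pos hθpos hgood
    have h1t : 0 ≤ 1 - t := by linarith [ht.2]
    have h1t' : (1-t) * θ ≤ θ := by nlinarith [ht.1]
    have hA0 : 0 ≤ (1-t)*θ := mul_nonneg h1t hθ0
    have hgA : K/(N-1) * ((1-t)*θ)^2 < Real.pi^2 := good_mono hA0 h1t' hgood
    have hsA : 0 ≤ sOf (K/(N-1)) ((1-t)*θ) := sOf_nonneg hA0 hgA
    have hσ : sigmaCoeff K N (1 - t) θ
        = ENNReal.ofReal (sOf (K/(N-1)) ((1-t)*θ) / sOf (K/(N-1)) θ) := by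
      rw [sigmaCoeff, if_neg hng, if_neg hz]
    rw [hσ] at key
    set r := sOf (K/(N-1)) ((1-t)*θ) / sOf (K/(N-1)) θ with hr
    have hr0 : 0 ≤ r := div_nonneg hsA hsθ.le
    rw [ENNReal.ofReal_rpow_of_nonneg hr0 (by linarith : (0:ℝ) ≤ N - 1),
      ← ENNReal.ofReal_mul (Real.rpow_nonneg hr0 _)] at key
    have hreal : r ^ (N-1) * h x₀ ≤ h ((1-t)*x₀ + t*x₁) :=
      (ENNReal.ofReal_le_ofReal_iff (hh.1 _)).1 key
    have hrpow : r ^ (N-1) = sOf (K/(N-1)) ((1-t)*θ) ^ (N-1) / sOf (K/(N-1)) θ ^ (N-1) :=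
      Real.div_rpow hsA hsθ.le _
    rw [hrpow] at hreal
    have hp : 0 < sOf (K/(N-1)) θ ^ (N-1) := Real.rpow_pos_of_pos hsθ _
    rw [div_mul_eq_mul_div, div_le_iff₀ hp] at hreal
    linarith [hreal,
      mul_comm (h ((1-t)*x₀ + t*x₁)) (sOf (K/(N-1)) θ ^ (N-1))]


lemma mono_right (hN : 1 < N) (hh : IsMCPDensity K N h) {v z z' : ℝ}
    (hv : v ∈ densSupport h) (hz : z ∈ densSupport h)
    (hpos : 0 < h z) (hzz : z ≤ z') (hz'v : z' < v) :
    K / (N - 1) * (v - z) ^ 2 < Real.pi ^ 2 ∧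
      sOf (K / (N - 1)) (v - z') ^ (N - 1) * h z ≤
        sOf (K / (N - 1)) (v - z) ^ (N - 1) * h z' := by 
  have hvz : 0 < v - z := by linarith
  have ht : (z' - z) / (v - z) ∈ Icc (0:ℝ) 1 :=
    ⟨div_nonneg (by linarith) hvz.le, (div_le_one hvz).2 (by linarith)⟩
  obtain ⟨g1, g2⟩ := mcp_key hN hh hz hv ht hpos
  have e1 : |v - z| = v - z := abs_of_pos hvz
  rw [e1] at g1 g2
  have e2 : (1 - (z' - z) / (v - z)) * (v - z) = v - z' := by
    rw [sub_mul, one_mul, div_mul_cancel₀ _ (ne_of_gt hvz)]; ring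
  have e3 : (1 - (z' - z) / (v - z)) * z + (z' - z) / (v - z) * v = z' := by
    field_simp
    ring
  rw [e2, e3] at g2
  exact ⟨g1, g2⟩


lemma mono_left (hN : 1 < N) (hh : IsMCPDensity K N h) {u z z' : ℝ}
    (hu : u ∈ densSupport h) (hz' : z' ∈ densSupport h)
    (hpos : 0 < h z') (huz : u < z) (hzz : z ≤ z') :
    K / (N - 1) * (z' - u) ^ 2 < Real.pi ^ 2 ∧
      sOf (K / (N - 1)) (z - u) ^ (N - 1) * h z' ≤
        sOf (K / (N - 1)) (z' - u) ^ (N - 1) * h z := by 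
  have hzu : 0 < z' - u := by linarith
  have ht : (z' - z) / (z' - u) ∈ Icc (0:ℝ) 1 :=
    ⟨div_nonneg (by linarith) hzu.le, (div_le_one hzu).2 (by linarith)⟩
  obtain ⟨g1, g2⟩ := mcp_key hN hh hz' hu ht hpos
  have e1 : |u - z'| = z' - u := by rw [abs_sub_comm, abs_of_pos hzu]
  rw [e1] at g1 g2
  have e2 : (1 - (z' - z) / (z' - u)) * (z' - u) = z - u := by
    rw [sub_mul, one_mul, div_mul_cancel₀ _ (ne_of_gt hzu)]; ring
  have e3 : (1 - (z' - z) / (z' - u)) * z' + (z' - z) / (z' - u) * u = z := by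
    field_simp
    ring
  rw [e2, e3] at g2
  exact ⟨g1, g2⟩


lemma ordConnected (hN : 1 < N) (hh : IsMCPDensity K N h) :
    (densSupport h).OrdConnected := by 
  have hN1 : (0:ℝ) < N - 1 := by linarith
  constructor
  intro x hx y hy z hz
  rcases eq_or_lt_of_le hz.1 with rfl | hxz
  · exact hx
  rcases eq_or_lt_of_le hz.2 with rfl | hzy
  · exact hy
  intro U hU hzU
  obtain ⟨ε₀, hε₀, hball⟩ := Metric.isOpen_iff.1 hU z hzU
  set ε := min (min (ε₀ / 2) ((z - x) / 2)) ((y - z) / 2) with hεdef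
  have hε1 : ε ≤ ε₀ / 2 := le_trans (min_le_left _ _) (min_le_left _ _)
  have hε2 : ε ≤ (z - x) / 2 := le_trans (min_le_left _ _) (min_le_right _ _)
  have hε3 : ε ≤ (y - z) / 2 := min_le_right _ _
  have hεpos : 0 < ε := lt_min (lt_min (by linarith) (by linarith)) (by linarith)
  obtain ⟨x₀, hx₀S, hx₀d, hx₀pos⟩ := exists_pos_near hh hx hεpos
  rw [abs_lt] at hx₀d
  have hx₀z : x₀ < z - ε := by linarith
  set W := Icc (z - ε / 2) (z + ε / 2) with hWdef
  set κ := K / (N - 1) with hκ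
  -- goodness of (y - x₀)
  obtain ⟨g1, -⟩ := mono_right hN hh hy hx₀S hx₀pos (le_of_lt (by linarith : x₀ < z))
    (by linarith : z < y)
  have hyx₀ : 0 < y - x₀ := by linarith
  have hsθ : 0 < sOf κ (y - x₀) := sOf_pos hyx₀ g1
  -- min of sOf on the relevant interval
  have hd1 : 0 < y - z - ε / 2 := by linarith
  have hne : (Icc (y - z - ε / 2) (y - z + ε / 2)).Nonempty := by
    rw [nonempty_Icc]; linarith
  obtain ⟨θm, hθm, hmin⟩ := isCompact_Icc.exists_isMinOn hne (sOf_continuous κ).continuousOn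
  have hθmle : θm ≤ y - x₀ := by
    have := hθm.2
    linarith [hx₀z]
  have hm : 0 < sOf κ θm := sOf_pos (by linarith [hθm.1]) (good_mono (by linarith [hθm.1]) hθmle g1)
  set c := sOf κ θm ^ (N - 1) * h x₀ / sOf κ (y - x₀) ^ (N - 1) with hc
  have hcpos : 0 < c :=
    div_pos (mul_pos (Real.rpow_pos_of_pos hm _) hx₀pos) (Real.rpow_pos_of_pos hsθ _)
  -- pointwise bound on W
  have hpt : ∀ w ∈ W, ENNReal.ofReal c ≤ ENNReal.ofReal (h w) := by
    intro w hw
    obtain ⟨hw1, hw2⟩ := hw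
    obtain ⟨-, g2⟩ := mono_right hN hh hy hx₀S hx₀pos
      (le_of_lt (by linarith : x₀ < w)) (by linarith : w < y)
    have hb : sOf κ θm ≤ sOf κ (y - w) := hmin ⟨by linarith, by linarith⟩
    have hb' : sOf κ θm ^ (N - 1) ≤ sOf κ (y - w) ^ (N - 1) :=
      Real.rpow_le_rpow hm.le hb (by linarith)
    apply ENNReal.ofReal_le_ofReal
    rw [hc, div_le_iff₀ (Real.rpow_pos_of_pos hsθ _)]
    calc sOf κ θm ^ (N - 1) * h x₀ ≤ sOf κ (y - w) ^ (N - 1) * h x₀ :=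
          mul_le_mul_of_nonneg_right hb' hx₀pos.le
      _ ≤ sOf κ (y - x₀) ^ (N - 1) * h w := g2
      _ = h w * sOf κ (y - x₀) ^ (N - 1) := mul_comm _ _
  have hWU : W ⊆ U := by
    intro w hw
    apply hball
    rw [Metric.mem_ball, Real.dist_eq, abs_lt]
    exact ⟨by linarith [hw.1], by linarith [hw.2]⟩
  have hMW : MeasurableSet W := measurableSet_Icc
  have hvol : (volume.withDensity fun y => ENNReal.ofReal (h y)) U
      = ∫⁻ y in U, ENNReal.ofReal (h y) ∂volume := withDensity_apply _ hU.measurableSet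
  rw [hvol]
  have step1 : ENNReal.ofReal c * volume W ≤ ∫⁻ y in W, ENNReal.ofReal (h y) ∂volume := by
    rw [← setLIntegral_const W (ENNReal.ofReal c)]
    exact lintegral_mono_ae (MeasureTheory.ae_restrict_of_forall_mem hMW hpt)
  have step2 : (∫⁻ y in W, ENNReal.ofReal (h y) ∂volume)
      ≤ ∫⁻ y in U, ENNReal.ofReal (h y) ∂volume :=
    lintegral_mono' (Measure.restrict_mono hWU le_rfl) le_rfl
  refine lt_of_lt_of_le (lt_of_lt_of_le ?_ step1) step2
  rw [hWdef, Real.volume_Icc]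
  apply ENNReal.mul_pos (ENNReal.ofReal_pos.2 hcpos).ne'
  rw [show z + ε / 2 - (z - ε / 2) = ε by ring]
  exact (ENNReal.ofReal_pos.2 hεpos).ne'


lemma pos_interior (hN : 1 < N) (hh : IsMCPDensity K N h) :
    ∀ x ∈ interior (densSupport h), 0 < h x := by 
  have hN1 : (0:ℝ) < N - 1 := by linarith
  intro x hx
  obtain ⟨δ, hδ, hsub⟩ := Metric.isOpen_iff.1 isOpen_interior x hx
  have hsubS : Metric.ball x δ ⊆ densSupport h := fun y hy => interior_subset (hsub hy)
  have hx₁S : x + δ / 2 ∈ densSupport h := by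
    apply hsubS
    rw [Metric.mem_ball, Real.dist_eq]
    rw [abs_of_pos (by linarith)]
    linarith
  have hxS : x - δ / 4 ∈ densSupport h := by
    apply hsubS
    rw [Metric.mem_ball, Real.dist_eq]
    rw [abs_of_neg (by linarith)]
    linarith
  obtain ⟨x₀, hx₀S, hx₀d, hx₀pos⟩ := exists_pos_near hh hxS (show (0:ℝ) < δ / 8 by linarith)
  rw [abs_lt] at hx₀d
  have hx₀lt : x₀ < x := by linarith
  obtain ⟨g1, g2⟩ := mono_right hN hh hx₁S hx₀S hx₀pos hx₀lt.le (by linarith : x < x + δ / 2)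
  set κ := K / (N - 1) with hκ
  have e1 : x + δ / 2 - x = δ / 2 := by ring
  rw [e1] at g2
  have hgd : κ * (δ / 2) ^ 2 < Real.pi ^ 2 :=
    good_mono (by linarith) (by linarith : δ / 2 ≤ x + δ / 2 - x₀) g1
  have hs1 : 0 < sOf κ (δ / 2) := sOf_pos (by linarith) hgd
  have hs2 : 0 < sOf κ (x + δ / 2 - x₀) := sOf_pos (by linarith) g1
  by_contra hcon
  push_neg at hcon
  linarith [g2, mul_pos (Real.rpow_pos_of_pos hs1 (N - 1)) hx₀pos,
    mul_nonpos_of_nonneg_of_nonpos (Real.rpow_pos_of_pos hs2 (N - 1)).le hcon]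


lemma exists_le_avg (hh : IsMCPDensity K N h) {p q : ℝ} (hpq : p < q) :
    ∃ w ∈ Ioo p q, h w ≤ (∫ y in Icc p q, h y) / (q - p) + 1 := by 
  by_contra hcon
  push_neg at hcon
  set A := (∫ y in Icc p q, h y) / (q - p) with hA
  have hint : IntegrableOn h (Icc p q) volume := hh.2.1.integrableOn_isCompact isCompact_Icc
  have hint' : IntegrableOn h (Ioo p q) volume := hint.mono_set Ioo_subset_Icc_self
  have hcle : IntegrableOn (fun _ : ℝ => A + 1) (Ioo p q) volume :=
    integrableOn_const measure_Ioo_lt_top.ne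
  have hge : (∫ _ in Ioo p q, (A + 1)) ≤ ∫ y in Ioo p q, h y :=
    setIntegral_mono_on hcle hint' measurableSet_Ioo (fun w hw => (hcon w hw).le)
  rw [setIntegral_const, ← integral_Icc_eq_integral_Ioo, Real.volume_real_Ioo_of_le hpq.le] at hge
  have hqp : q - p ≠ 0 := by linarith
  have : (q - p) • (A + 1) = (∫ y in Icc p q, h y) + (q - p) := by
    rw [smul_eq_mul, hA]
    field_simp
  rw [this] at hge
  linarith


lemma bddAbove_compact (hN : 1 < N) (hh : IsMCPDensity K N h) :
    ∀ C : Set ℝ, IsCompact C → C ⊆ densSupport h → BddAbove (h '' C) := by 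
  have hN1 : (0:ℝ) < N - 1 := by linarith
  intro C hC hCS
  rcases C.eq_empty_or_nonempty with rfl | hne
  · simp
  have hSoc := ordConnected hN hh
  set κ := K / (N - 1) with hκ
  set a := sInf C with ha
  set b := sSup C with hb
  have haC : a ∈ C := hC.sInf_mem hne
  have hbC : b ∈ C := hC.sSup_mem hne
  have haS : a ∈ densSupport h := hCS haC
  have hbS : b ∈ densSupport h := hCS hbC
  have hab : a ≤ b := csInf_le hC.bddBelow hbC
  rcases eq_or_lt_of_le hab with heq | hab
  · refine ⟨h a, fun y hy => ?_⟩
    obtain ⟨w, hwC, rfl⟩ := hy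
    have h1 : a ≤ w := csInf_le hC.bddBelow hwC
    have h2 : w ≤ b := le_csSup hC.bddAbove hwC
    rw [show w = a from le_antisymm (heq ▸ h2) h1]
  set mid := (a + b) / 2 with hmid
  obtain ⟨wL, hwL, hwLle⟩ := exists_le_avg hh (show a < mid by rw [hmid]; linarith)
  obtain ⟨wR, hwR, hwRle⟩ := exists_le_avg hh (show mid < b by rw [hmid]; linarith)
  set AL := (∫ y in Icc a mid, h y) / (mid - a) + 1 with hAL
  set AR := (∫ y in Icc mid b, h y) / (b - mid) + 1 with hAR
  obtain ⟨θM, hθM, hmax⟩ := isCompact_Icc.exists_isMaxOn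
    (nonempty_Icc.2 (by linarith : (0:ℝ) ≤ b - a)) (sOf_continuous κ).continuousOn
  set Ms := sOf κ θM with hMs
  have hMs0 : 0 ≤ Ms := by
    have h0 : sOf κ 0 ≤ sOf κ θM := hmax ⟨le_refl 0, by linarith⟩
    rwa [sOf_zero] at h0
  set bound := max 0 (max (AL * Ms ^ (N - 1) / sOf κ (wL - a) ^ (N - 1))
    (AR * Ms ^ (N - 1) / sOf κ (b - wR) ^ (N - 1))) with hbound
  refine ⟨bound, fun y hy => ?_⟩
  obtain ⟨w, hwC, rfl⟩ := hy
  rcases le_or_gt (h w) 0 with hw0 | hwpos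
  · exact le_trans hw0 (le_max_left _ _)
  have hwa : a ≤ w := csInf_le hC.bddBelow hwC
  have hwb : w ≤ b := le_csSup hC.bddAbove hwC
  have hwS : w ∈ densSupport h := hCS hwC
  rcases lt_or_ge wL w with hcase | hcase
  · -- use left anchor a with intermediate wL
    obtain ⟨g1, g2⟩ := mono_left hN hh haS hwS hwpos hwL.1 hcase.le
    have hsd : 0 < sOf κ (wL - a) :=
      sOf_pos (by linarith [hwL.1]) (good_mono (by linarith [hwL.1]) (by linarith) g1)
    have hsn : sOf κ (w - a) ≤ Ms := hmax ⟨by linarith, by linarith⟩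
    have hsn' : sOf κ (w - a) ^ (N - 1) ≤ Ms ^ (N - 1) :=
      Real.rpow_le_rpow (sOf_nonneg (by linarith) (good_mono (by linarith) (le_refl _) g1))
        hsn (by linarith)
    have hle1 : sOf κ (wL - a) ^ (N - 1) * h w ≤ AL * Ms ^ (N - 1) := by
      refine le_trans g2 ?_
      calc sOf κ (w - a) ^ (N - 1) * h wL ≤ Ms ^ (N - 1) * AL := by
            apply mul_le_mul hsn' hwLle (hh.1 wL) (Real.rpow_nonneg hMs0 _)
        _ = AL * Ms ^ (N - 1) := mul_comm _ _
    have : h w ≤ AL * Ms ^ (N - 1) / sOf κ (wL - a) ^ (N - 1) := by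
      rw [le_div_iff₀ (Real.rpow_pos_of_pos hsd _)]
      calc h w * sOf κ (wL - a) ^ (N - 1) = sOf κ (wL - a) ^ (N - 1) * h w := mul_comm _ _
        _ ≤ AL * Ms ^ (N - 1) := hle1
    exact le_trans this (le_trans (le_max_left _ _) (le_max_right _ _))
  · -- use right anchor b with intermediate wR
    have hwwR : w ≤ wR := by
      have := hwR.1
      have := hwL.2
      linarith
    obtain ⟨g1, g2⟩ := mono_right hN hh hbS hwS hwpos hwwR hwR.2
    have hsd : 0 < sOf κ (b - wR) :=
      sOf_pos (by linarith [hwR.2]) (good_mono (by linarith [hwR.2]) (by linarith) g1)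
    have hsn : sOf κ (b - w) ≤ Ms := hmax ⟨by linarith, by linarith⟩
    have hsn' : sOf κ (b - w) ^ (N - 1) ≤ Ms ^ (N - 1) :=
      Real.rpow_le_rpow (sOf_nonneg (by linarith) (good_mono (by linarith) (le_refl _) g1))
        hsn (by linarith)
    have hle1 : sOf κ (b - wR) ^ (N - 1) * h w ≤ AR * Ms ^ (N - 1) := by
      refine le_trans g2 ?_
      calc sOf κ (b - w) ^ (N - 1) * h wR ≤ Ms ^ (N - 1) * AR := by
            apply mul_le_mul hsn' hwRle (hh.1 wR) (Real.rpow_nonneg hMs0 _)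
        _ = AR * Ms ^ (N - 1) := mul_comm _ _
    have : h w ≤ AR * Ms ^ (N - 1) / sOf κ (b - wR) ^ (N - 1) := by
      rw [le_div_iff₀ (Real.rpow_pos_of_pos hsd _)]
      calc h w * sOf κ (b - wR) ^ (N - 1) = sOf κ (b - wR) ^ (N - 1) * h w := mul_comm _ _
        _ ≤ AR * Ms ^ (N - 1) := hle1
    exact le_trans this (le_trans (le_max_right _ _) (le_max_right _ _))



lemma div_step {mp Aw d R : ℝ} (hmp : 0 < mp) (hA : mp ≤ Aw) (hR : 0 ≤ R)
    (hd : Aw * d ≤ R) : d ≤ R / mp := by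
  rcases le_or_gt d 0 with h0 | h0
  · exact le_trans h0 (div_nonneg hR hmp.le)
  · rw [le_div_iff₀ hmp]
    nlinarith

set_option maxHeartbeats 1600000 in
lemma locally_lipschitz (hN : 1 < N) (hh : IsMCPDensity K N h) :
    ∀ x ∈ interior (densSupport h), ∃ t ∈ nhds x, ∃ L : NNReal, LipschitzOnWith L h t := by 
  have hN1 : (0:ℝ) < N - 1 := by linarith
  intro x hx
  obtain ⟨δ, hδ, hsub⟩ := Metric.isOpen_iff.1 isOpen_interior x hx
  set κ := K / (N - 1) with hκ
  set ε := δ / 3 with hε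
  have hεpos : 0 < ε := by rw [hε]; linarith
  have hIccI : Icc (x - 2*ε) (x + 2*ε) ⊆ interior (densSupport h) := by
    intro w hw
    apply hsub
    rw [Metric.mem_ball, Real.dist_eq, abs_lt]
    constructor
    · linarith [hw.1]
    · linarith [hw.2]
  set u := x - 2*ε with hu
  set v := x + 2*ε with hv
  have huS : u ∈ densSupport h := interior_subset (hIccI ⟨le_refl _, by linarith⟩)
  have hvS : v ∈ densSupport h := interior_subset (hIccI ⟨by linarith, le_refl _⟩)
  set J := Icc (x - ε) (x + ε) with hJ
  have hJI : J ⊆ interior (densSupport h) := by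
    intro w hw
    exact hIccI ⟨by linarith [hw.1], by linarith [hw.2]⟩
  have hJS : J ⊆ densSupport h := fun w hw => interior_subset (hJI hw)
  have hposJ : ∀ w ∈ J, 0 < h w := fun w hw => pos_interior hN hh w (hJI hw)
  -- goodness of all θ' in [ε, 3ε]
  have hgood : ∀ θ' ∈ Icc ε (3*ε), κ * θ' ^ 2 < Real.pi ^ 2 := by
    intro θ' hθ'
    have hwJ : v - θ' ∈ J := ⟨by simp only [hv, hJ]; linarith [hθ'.2], by simp only [hv, hJ]; linarith [hθ'.1]⟩
    obtain ⟨g1, -⟩ := mono_right hN hh hvS (hJS hwJ) (hposJ _ hwJ) (le_refl (v - θ'))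
      (by linarith [hθ'.1] : v - θ' < v)
    have : v - (v - θ') = θ' := by ring
    rwa [this] at g1
  -- min and max of sOf on [ε, 3ε]
  obtain ⟨θm, hθm, hmin⟩ := isCompact_Icc.exists_isMinOn
    (nonempty_Icc.2 (by linarith : ε ≤ 3*ε)) (sOf_continuous κ).continuousOn
  obtain ⟨θM, hθM, hmax⟩ := isCompact_Icc.exists_isMaxOn
    (nonempty_Icc.2 (by linarith : ε ≤ 3*ε)) (sOf_continuous κ).continuousOn
  set m₁ := sOf κ θm with hm₁
  set m₂ := sOf κ θM with hm₂
  have hm₁pos : 0 < m₁ := sOf_pos (by linarith [hθm.1]) (hgood θm hθm)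
  -- Lipschitz constants
  obtain ⟨C₁, hC₁0, hC₁⟩ := sOf_dist_le κ (3*ε)
  obtain ⟨C₂, hC₂0, hC₂⟩ := rpow_dist_le (N - 1) hm₁pos
  obtain ⟨M, hM⟩ := bddAbove_compact hN hh J isCompact_Icc hJS
  have hMw : ∀ w ∈ J, h w ≤ M := fun w hw => hM (mem_image_of_mem h hw)
  have hM0 : 0 < M := lt_of_lt_of_le (hposJ x ⟨by linarith, by linarith⟩)
    (hMw x ⟨by linarith, by linarith⟩)
  set mp := m₁ ^ (N - 1) with hmp
  have hmppos : 0 < mp := Real.rpow_pos_of_pos hm₁pos _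
  set Lr := C₂ * C₁ * M / mp with hLr
  have hLr0 : 0 ≤ Lr := by positivity
  -- facts about sOf values
  have hrange : ∀ θ' ∈ Icc ε (3*ε), sOf κ θ' ∈ Icc m₁ m₂ :=
    fun θ' hθ' => ⟨hmin hθ', hmax hθ'⟩
  have hAbound : ∀ θ' ∈ Icc ε (3*ε), mp ≤ sOf κ θ' ^ (N - 1) := by
    intro θ' hθ'
    exact Real.rpow_le_rpow hm₁pos.le (hrange θ' hθ').1 (by linarith)
  have hAdiff : ∀ θ₁ ∈ Icc ε (3*ε), ∀ θ₂ ∈ Icc ε (3*ε),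
      |sOf κ θ₁ ^ (N - 1) - sOf κ θ₂ ^ (N - 1)| ≤ C₂ * (C₁ * |θ₁ - θ₂|) := by
    intro θ₁ h₁ θ₂ h₂
    have s1 := hC₂ _ (hrange θ₁ h₁) _ (hrange θ₂ h₂)
    have s2 := hC₁ θ₁ ⟨by linarith [h₁.1], h₁.2⟩ θ₂ ⟨by linarith [h₂.1], h₂.2⟩
    calc |sOf κ θ₁ ^ (N - 1) - sOf κ θ₂ ^ (N - 1)| ≤ C₂ * |sOf κ θ₁ - sOf κ θ₂| := s1
      _ ≤ C₂ * (C₁ * |θ₁ - θ₂|) := mul_le_mul_of_nonneg_left s2 hC₂0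
  -- main two-point estimate
  have key : ∀ w ∈ J, ∀ w' ∈ J, w ≤ w' → |h w' - h w| ≤ Lr * (w' - w) := by
    intro w hw w' hw' hww'
    have hwv' : w' < v := by rw [hv]; linarith [hw'.2]
    have huw : u < w := by rw [hu]; linarith [hw.1]
    have hvwm : v - w ∈ Icc ε (3*ε) := ⟨by rw [hv]; linarith [hw.2], by rw [hv]; linarith [hw.1]⟩
    have hvw'm : v - w' ∈ Icc ε (3*ε) := ⟨by rw [hv]; linarith [hw'.2], by rw [hv]; linarith [hw'.1]⟩
    have hwum : w - u ∈ Icc ε (3*ε) := ⟨by rw [hu]; linarith [hw.1], by rw [hu]; linarith [hw.2]⟩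
    have hw'um : w' - u ∈ Icc ε (3*ε) := ⟨by rw [hu]; linarith [hw'.1], by rw [hu]; linarith [hw'.2]⟩
    obtain ⟨-, g2⟩ := mono_right hN hh hvS (hJS hw) (hposJ w hw) hww' hwv'
    obtain ⟨-, g2'⟩ := mono_left hN hh huS (hJS hw') (hposJ w' hw') huw hww'
    set Aw := sOf κ (v - w) ^ (N - 1) with hAw
    set Aw' := sOf κ (v - w') ^ (N - 1) with hAw'
    set Bw := sOf κ (w - u) ^ (N - 1) with hBw
    set Bw' := sOf κ (w' - u) ^ (N - 1) with hBw'
    -- g2 : Aw' * h w ≤ Aw * h w', g2' : Bw * h w' ≤ Bw' * h w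
    have hAd : Aw - Aw' ≤ C₂ * (C₁ * (w' - w)) := by
      have := hAdiff _ hvwm _ hvw'm
      rw [show v - w - (v - w') = w' - w by ring, abs_of_nonneg (by linarith : (0:ℝ) ≤ w' - w)]
        at this
      exact le_trans (le_abs_self _) this
    have hBd : Bw' - Bw ≤ C₂ * (C₁ * (w' - w)) := by
      have := hAdiff _ hw'um _ hwum
      rw [show w' - u - (w - u) = w' - w by ring, abs_of_nonneg (by linarith : (0:ℝ) ≤ w' - w)]
        at this
      exact le_trans (le_abs_self _) this
    have hAlow : mp ≤ Aw := hAbound _ hvwm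
    have hBlow : mp ≤ Bw := hAbound _ hwum
    have hhw0 : 0 ≤ h w := hh.1 w
    have hhwM : h w ≤ M := hMw w hw
    have hRnn : 0 ≤ C₂ * C₁ * M * (w' - w) :=
      mul_nonneg (mul_nonneg (mul_nonneg hC₂0 hC₁0) hM0.le) (by linarith)
    have h0' : 0 ≤ C₂ * (C₁ * (w' - w)) := mul_nonneg hC₂0 (mul_nonneg hC₁0 (by linarith))
    -- lower estimate : h w - h w' ≤ Lr * (w' - w)
    have hlow : h w - h w' ≤ Lr * (w' - w) := by
      have hchain : Aw * (h w - h w') ≤ C₂ * C₁ * M * (w' - w) := by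
        have e1 := mul_le_mul_of_nonneg_right hAd hhw0
        have e2 := mul_le_mul_of_nonneg_left hhwM h0'
        nlinarith [g2, e1, e2]
      have := div_step hmppos hAlow hRnn hchain
      calc h w - h w' ≤ C₂ * C₁ * M * (w' - w) / mp := this
        _ = Lr * (w' - w) := by rw [hLr]; ring
    -- upper estimate : h w' - h w ≤ Lr * (w' - w)
    have hup : h w' - h w ≤ Lr * (w' - w) := by
      have hchain : Bw * (h w' - h w) ≤ C₂ * C₁ * M * (w' - w) := by
        have e1 := mul_le_mul_of_nonneg_right hBd hhw0
        have e2 := mul_le_mul_of_nonneg_left hhwM h0'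
        nlinarith [g2', e1, e2]
      have := div_step hmppos hBlow hRnn hchain
      calc h w' - h w ≤ C₂ * C₁ * M * (w' - w) / mp := this
        _ = Lr * (w' - w) := by rw [hLr]; ring
    rw [abs_le]
    constructor
    · linarith
    · linarith
  refine ⟨J, Icc_mem_nhds (by linarith) (by linarith), Real.toNNReal Lr, ?_⟩
  rw [lipschitzOnWith_iff_dist_le_mul]
  intro w hw w' hw'
  rw [Real.dist_eq, Real.dist_eq, Real.coe_toNNReal _ hLr0]
  rcases le_total w w' with hc | hc
  · rw [abs_sub_comm (h w) (h w'), abs_sub_comm w w',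
      abs_of_nonneg (by linarith : (0:ℝ) ≤ w' - w)]
    exact key w hw w' hw' hc
  · rw [abs_of_nonneg (by linarith : (0:ℝ) ≤ w - w')]
    exact key w' hw' w hw hc



lemma Ioo_subset_interior (hN : 1 < N) (hh : IsMCPDensity K N h) {p q : ℝ}
    (hp : p ∈ densSupport h) (hq : q ∈ densSupport h) :
    Ioo p q ⊆ interior (densSupport h) :=
  interior_maximal (fun w hw => (ordConnected hN hh).out hp hq ⟨hw.1.le, hw.2.le⟩) isOpen_Ioo

lemma boundary_limit_right (hN : 1 < N) (hh : IsMCPDensity K N h) {x c : ℝ}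
    (hxS : x ∈ densSupport h) (hci : c ∈ interior (densSupport h)) (hxc : x < c) :
    ∃ L : ℝ, 0 ≤ L ∧ Tendsto h (nhdsWithin x (Ioi x)) (nhds L) := by
  have hN1 : (0:ℝ) < N - 1 := by linarith
  set κ := K / (N - 1) with hκ
  have hcS : c ∈ densSupport h := interior_subset hci
  have hIoo : Ioo x c ⊆ interior (densSupport h) := Ioo_subset_interior hN hh hxS hcS
  have hposI : ∀ z ∈ Ioo x c, 0 < h z := fun z hz => pos_interior hN hh z (hIoo hz)
  have hgood : ∀ z ∈ Ioo x c, κ * (c - z) ^ 2 < Real.pi ^ 2 := fun z hz =>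
    (mono_right hN hh hcS (interior_subset (hIoo hz)) (hposI z hz) (le_refl z) hz.2).1
  set A : ℝ → ℝ := fun z => sOf κ (c - z) ^ (N - 1) with hA
  set F : ℝ → ℝ := fun z => h z / A z with hF
  have hApos : ∀ z ∈ Ioo x c, 0 < A z := fun z hz =>
    Real.rpow_pos_of_pos (sOf_pos (by linarith [hz.2]) (hgood z hz)) _
  have hmono : MonotoneOn F (Ioo x c) := by
    intro z hz z' hz' hzz
    have g2 := (mono_right hN hh hcS (interior_subset (hIoo hz)) (hposI z hz) hzz hz'.2).2
    show h z / A z ≤ h z' / A z'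
    rw [div_le_div_iff₀ (hApos z hz) (hApos z' hz')]
    calc h z * A z' = sOf κ (c - z') ^ (N - 1) * h z := mul_comm _ _
      _ ≤ sOf κ (c - z) ^ (N - 1) * h z' := g2
      _ = h z' * A z := mul_comm _ _
  have hbdd : BddBelow (F '' Ioo x c) := by
    refine ⟨0, fun y hy => ?_⟩
    obtain ⟨z, hz, rfl⟩ := hy
    exact div_nonneg (hh.1 z) (hApos z hz).le
  have hne : (Ioo x c).Nonempty := nonempty_Ioo.2 hxc
  have hlimF : Tendsto F (nhdsWithin x (Ioi x)) (nhds (sInf (F '' Ioo x c))) :=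
    hmono.tendsto_nhdsWithin_Ioo_right hne hbdd
  have hAc : ContinuousAt A x := by
    have h1 : ContinuousAt (fun z => sOf κ (c - z)) x :=
      (sOf_continuous κ).continuousAt.comp ((continuous_const.sub continuous_id).continuousAt)
    have h2 : ContinuousAt (fun y : ℝ => y ^ (N - 1)) (sOf κ (c - x)) :=
      Real.continuousAt_rpow_const _ _ (Or.inr (by linarith))
    exact ContinuousAt.comp (g := fun y : ℝ => y ^ (N - 1))
      (f := fun z => sOf κ (c - z)) h2 h1
  set L := sInf (F '' Ioo x c) * A x with hL
  have hTend : Tendsto h (nhdsWithin x (Ioi x)) (nhds L) := by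
    have hmul : Tendsto (fun z => F z * A z) (nhdsWithin x (Ioi x)) (nhds L) :=
      hlimF.mul (hAc.tendsto.mono_left nhdsWithin_le_nhds)
    apply hmul.congr'
    filter_upwards [Ioo_mem_nhdsGT hxc] with z hz
    exact div_mul_cancel₀ _ (hApos z hz).ne'
  have hL0 : 0 ≤ L :=
    ge_of_tendsto hTend (Eventually.of_forall fun z => hh.1 z)
  exact ⟨L, hL0, hTend⟩

lemma boundary_limit_left (hN : 1 < N) (hh : IsMCPDensity K N h) {x c : ℝ}
    (hxS : x ∈ densSupport h) (hci : c ∈ interior (densSupport h)) (hcx : c < x) :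
    ∃ L : ℝ, 0 ≤ L ∧ Tendsto h (nhdsWithin x (Iio x)) (nhds L) := by
  have hN1 : (0:ℝ) < N - 1 := by linarith
  set κ := K / (N - 1) with hκ
  have hcS : c ∈ densSupport h := interior_subset hci
  have hIoo : Ioo c x ⊆ interior (densSupport h) := Ioo_subset_interior hN hh hcS hxS
  have hposI : ∀ z ∈ Ioo c x, 0 < h z := fun z hz => pos_interior hN hh z (hIoo hz)
  have hgood : ∀ z ∈ Ioo c x, κ * (z - c) ^ 2 < Real.pi ^ 2 := fun z hz =>
    (mono_left hN hh hcS (interior_subset (hIoo hz)) (hposI z hz) hz.1 (le_refl z)).1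
  set A : ℝ → ℝ := fun z => sOf κ (z - c) ^ (N - 1) with hA
  set F : ℝ → ℝ := fun z => h z / A z with hF
  have hApos : ∀ z ∈ Ioo c x, 0 < A z := fun z hz =>
    Real.rpow_pos_of_pos (sOf_pos (by linarith [hz.1]) (hgood z hz)) _
  have hmono : AntitoneOn F (Ioo c x) := by
    intro z hz z' hz' hzz
    have g2 := (mono_left hN hh hcS (interior_subset (hIoo hz')) (hposI z' hz') hz.1 hzz).2
    show h z' / A z' ≤ h z / A z
    rw [div_le_div_iff₀ (hApos z' hz') (hApos z hz)]
    calc h z' * A z = sOf κ (z - c) ^ (N - 1) * h z' := mul_comm _ _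
      _ ≤ sOf κ (z' - c) ^ (N - 1) * h z := g2
      _ = h z * A z' := mul_comm _ _
  have hbdd : BddBelow (F '' Ioo c x) := by
    refine ⟨0, fun y hy => ?_⟩
    obtain ⟨z, hz, rfl⟩ := hy
    exact div_nonneg (hh.1 z) (hApos z hz).le
  have hne : (Ioo c x).Nonempty := nonempty_Ioo.2 hcx
  have hlimF : Tendsto F (nhdsWithin x (Iio x)) (nhds (sInf (F '' Ioo c x))) :=
    hmono.tendsto_nhdsWithin_Ioo_left hne hbdd
  have hAc : ContinuousAt A x := by
    have h1 : ContinuousAt (fun z => sOf κ (z - c)) x :=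
      (sOf_continuous κ).continuousAt.comp ((continuous_id.sub continuous_const).continuousAt)
    have h2 : ContinuousAt (fun y : ℝ => y ^ (N - 1)) (sOf κ (x - c)) :=
      Real.continuousAt_rpow_const _ _ (Or.inr (by linarith))
    exact ContinuousAt.comp (g := fun y : ℝ => y ^ (N - 1))
      (f := fun z => sOf κ (z - c)) h2 h1
  set L := sInf (F '' Ioo c x) * A x with hL
  have hTend : Tendsto h (nhdsWithin x (Iio x)) (nhds L) := by
    have hmul : Tendsto (fun z => F z * A z) (nhdsWithin x (Iio x)) (nhds L) :=
      hlimF.mul (hAc.tendsto.mono_left nhdsWithin_le_nhds)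
    apply hmul.congr'
    filter_upwards [Ioo_mem_nhdsLT hcx] with z hz
    exact div_mul_cancel₀ _ (hApos z hz).ne'
  have hL0 : 0 ≤ L :=
    ge_of_tendsto hTend (Eventually.of_forall fun z => hh.1 z)
  exact ⟨L, hL0, hTend⟩

lemma exists_cont (hN : 1 < N) (hh : IsMCPDensity K N h) :
    ∃ h' : ℝ → ℝ, (∀ x, 0 ≤ h' x) ∧
      (∀ x, x ∉ densSupport h \ interior (densSupport h) → h' x = h x) ∧
      ContinuousOn h' (densSupport h) := by 
  classical
  have hN1 : (0:ℝ) < N - 1 := by linarith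
  by_cases hint : (interior (densSupport h)).Nonempty
  · obtain ⟨c, hci⟩ := hint
    have hcS : c ∈ densSupport h := interior_subset hci
    set F : ℝ → ℝ := fun y => if y ∈ densSupport h \ interior (densSupport h) then
        max 0 (limUnder (nhdsWithin y (interior (densSupport h))) h) else h y with hFdef
    have hFeqh : ∀ y, y ∉ densSupport h \ interior (densSupport h) → F y = h y :=
      fun y hy => if_neg hy
    have hFeqInt : ∀ y ∈ interior (densSupport h), F y = h y := fun y hy =>
      hFeqh y (fun hc => hc.2 hy)
    refine ⟨F, ?_, hFeqh, ?_⟩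
    · intro y
      by_cases hy : y ∈ densSupport h \ interior (densSupport h)
      · rw [hFdef]
        simp only [if_pos hy]
        exact le_max_left _ _
      · rw [hFeqh y hy]
        exact hh.1 y
    · intro x hx
      by_cases hxi : x ∈ interior (densSupport h)
      · have hcont : ContinuousAt h x := by
          obtain ⟨t, htn, L, hL⟩ := locally_lipschitz hN hh x hxi
          exact hL.continuousOn.continuousAt htn
        have heq : h =ᶠ[nhds x] F := by
          filter_upwards [isOpen_interior.mem_nhds hxi] with y hy
          exact (hFeqInt y hy).symm
        exact (hcont.congr heq).continuousWithinAt
      · have hxc_ne : x ≠ c := fun he => hxi (he ▸ hci)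
        rcases lt_or_gt_of_ne hxc_ne with hxc | hcx
        · -- x < c : x is a left endpoint
          obtain ⟨L, hL0, hTend⟩ := boundary_limit_right hN hh hx hci hxc
          have hSub : densSupport h ⊆ Ici x := by
            intro w hw
            by_contra hlt
            simp only [mem_Ici, not_le] at hlt
            exact hxi (Ioo_subset_interior hN hh hw hcS ⟨hlt, hxc⟩)
          have hIntSub : interior (densSupport h) ⊆ Ioi x := by
            intro w hw
            rcases lt_or_eq_of_le (mem_Ici.1 (hSub (interior_subset hw))) with hlt | he
            · exact hlt
            · subst he; exact absurd hw hxi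
          have hclos : x ∈ closure (interior (densSupport h)) := by
            have h1 : x ∈ closure (Ioo x c) := by
              rw [closure_Ioo (ne_of_lt hxc)]
              exact ⟨le_refl x, hxc.le⟩
            exact closure_mono (Ioo_subset_interior hN hh hx hcS) h1
          haveI hnb : (nhdsWithin x (interior (densSupport h))).NeBot :=
            mem_closure_iff_nhdsWithin_neBot.1 hclos
          have hTendInt : Tendsto h (nhdsWithin x (interior (densSupport h))) (nhds L) :=
            hTend.mono_left (nhdsWithin_mono x hIntSub)
          have hFx : F x = L := by
            have hxm : x ∈ densSupport h \ interior (densSupport h) := ⟨hx, hxi⟩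
            rw [hFdef]
            show (if x ∈ densSupport h \ interior (densSupport h) then
              max 0 (limUnder (nhdsWithin x (interior (densSupport h))) h) else h x) = L
            rw [if_pos hxm, hTendInt.limUnder_eq]
            exact max_eq_right hL0
          have hle : nhdsWithin x (densSupport h) ≤ pure x ⊔ nhdsWithin x (Ioi x) := by
            calc nhdsWithin x (densSupport h) ≤ nhdsWithin x ({x} ∪ Ioi x) := by
                  apply nhdsWithin_mono
                  intro w hw
                  rcases lt_or_eq_of_le (mem_Ici.1 (hSub hw)) with hl | he
                  · exact mem_union_right _ hl
                  · exact mem_union_left _ (mem_singleton_iff.2 he.symm)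
              _ = nhdsWithin x {x} ⊔ nhdsWithin x (Ioi x) := nhdsWithin_union _ _ _
              _ = pure x ⊔ nhdsWithin x (Ioi x) := by rw [nhdsWithin_singleton]
          have hFt : Tendsto F (pure x ⊔ nhdsWithin x (Ioi x)) (nhds L) := by
            rw [tendsto_sup]
            constructor
            · rw [← hFx]
              exact tendsto_pure_nhds F x
            · apply hTend.congr'
              filter_upwards [Ioo_mem_nhdsGT hxc] with z hz
              exact (hFeqInt z (Ioo_subset_interior hN hh hx hcS hz)).symm
          show Tendsto F (nhdsWithin x (densSupport h)) (nhds (F x))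
          rw [hFx]
          exact hFt.mono_left hle
        · -- c < x : x is a right endpoint
          obtain ⟨L, hL0, hTend⟩ := boundary_limit_left hN hh hx hci hcx
          have hSub : densSupport h ⊆ Iic x := by
            intro w hw
            by_contra hlt
            simp only [mem_Iic, not_le] at hlt
            exact hxi (Ioo_subset_interior hN hh hcS hw ⟨hcx, hlt⟩)
          have hIntSub : interior (densSupport h) ⊆ Iio x := by
            intro w hw
            rcases lt_or_eq_of_le (mem_Iic.1 (hSub (interior_subset hw))) with hlt | he
            · exact hlt
            · rw [he] at hw; exact absurd hw hxi
          have hclos : x ∈ closure (interior (densSupport h)) := by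
            have h1 : x ∈ closure (Ioo c x) := by
              rw [closure_Ioo (ne_of_lt hcx)]
              exact ⟨hcx.le, le_refl x⟩
            exact closure_mono (Ioo_subset_interior hN hh hcS hx) h1
          haveI hnb : (nhdsWithin x (interior (densSupport h))).NeBot :=
            mem_closure_iff_nhdsWithin_neBot.1 hclos
          have hTendInt : Tendsto h (nhdsWithin x (interior (densSupport h))) (nhds L) :=
            hTend.mono_left (nhdsWithin_mono x hIntSub)
          have hFx : F x = L := by
            have hxm : x ∈ densSupport h \ interior (densSupport h) := ⟨hx, hxi⟩
            rw [hFdef]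
            show (if x ∈ densSupport h \ interior (densSupport h) then
              max 0 (limUnder (nhdsWithin x (interior (densSupport h))) h) else h x) = L
            rw [if_pos hxm, hTendInt.limUnder_eq]
            exact max_eq_right hL0
          have hle : nhdsWithin x (densSupport h) ≤ pure x ⊔ nhdsWithin x (Iio x) := by
            calc nhdsWithin x (densSupport h) ≤ nhdsWithin x ({x} ∪ Iio x) := by
                  apply nhdsWithin_mono
                  intro w hw
                  rcases lt_or_eq_of_le (mem_Iic.1 (hSub hw)) with hl | he
                  · exact mem_union_right _ hl
                  · exact mem_union_left _ (mem_singleton_iff.2 he)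
              _ = nhdsWithin x {x} ⊔ nhdsWithin x (Iio x) := nhdsWithin_union _ _ _
              _ = pure x ⊔ nhdsWithin x (Iio x) := by rw [nhdsWithin_singleton]
          have hFt : Tendsto F (pure x ⊔ nhdsWithin x (Iio x)) (nhds L) := by
            rw [tendsto_sup]
            constructor
            · rw [← hFx]
              exact tendsto_pure_nhds F x
            · apply hTend.congr'
              filter_upwards [Ioo_mem_nhdsLT hcx] with z hz
              exact (hFeqInt z (Ioo_subset_interior hN hh hcS hx hz)).symm
          show Tendsto F (nhdsWithin x (densSupport h)) (nhds (F x))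
          rw [hFx]
          exact hFt.mono_left hle
  · refine ⟨h, hh.1, fun x _ => rfl, ?_⟩
    have hsub : (densSupport h).Subsingleton := by
      intro p hp q hq
      by_contra hne
      rcases lt_or_gt_of_ne hne with hlt | hlt
      · exact hint ⟨(p + q) / 2, Ioo_subset_interior hN hh hp hq ⟨by linarith, by linarith⟩⟩
      · exact hint ⟨(q + p) / 2, Ioo_subset_interior hN hh hq hp ⟨by linarith, by linarith⟩⟩
    intro x hx
    have hsx : densSupport h ⊆ {x} := fun y hy => hsub hy hx
    exact ContinuousWithinAt.mono continuousWithinAt_singleton hsx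


end MCPaux

/-- Regularity of `MCP(K,N)` densities: the support is a closed interval,
`h` is bounded above on compact subsets of the support, positive and locally Lipschitz on
the interior of the support, and can be modified at the (at most two) endpoints of the
support so as to become continuous on the support. -/
theorem mcp_density_regularity (K N : ℝ) (hN : 1 < N) (h : ℝ → ℝ)
    (hh : IsMCPDensity K N h) :
    (IsClosed (densSupport h) ∧ (densSupport h).OrdConnected) ∧
    (∀ C : Set ℝ, IsCompact C → C ⊆ densSupport h → BddAbove (h '' C)) ∧
    (∀ x ∈ interior (densSupport h), 0 < h x) ∧
    (∀ x ∈ interior (densSupport h), ∃ t ∈ nhds x, ∃ L : NNReal, LipschitzOnWith L h t) ∧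
    (∃ h' : ℝ → ℝ, (∀ x, 0 ≤ h' x) ∧
      (∀ x, x ∉ densSupport h \ interior (densSupport h) → h' x = h x) ∧
      ContinuousOn h' (densSupport h)) :=
  ⟨⟨MCPaux.densSupport_closed h, MCPaux.ordConnected hN hh⟩,
   MCPaux.bddAbove_compact hN hh, MCPaux.pos_interior hN hh,
   MCPaux.locally_lipschitz hN hh, MCPaux.exists_cont hN hh⟩
end

section
/- Let K > 0, N ∈ (1,∞), and let h be an MCP(K,N) density. Then the diameter of supp h is at most π·√((N−1)/K); that is, |x₁ − x₀| ≤ π·√((N−1)/K) for all x₀, x₁ ∈ supp h. -/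
open MeasureTheory Filter Set

/-- The complement of `densSupport h` is open. -/
lemma isOpen_compl_densSupport (h : ℝ → ℝ) : IsOpen (densSupport h)ᶜ := by
  rw [isOpen_iff_mem_nhds]
  intro x hx
  simp only [densSupport, mem_compl_iff, mem_setOf_eq, not_forall] at hx
  obtain ⟨U, hU, hxU, hμU⟩ := hx
  filter_upwards [hU.mem_nhds hxU] with y hy
  simp only [densSupport, mem_compl_iff, mem_setOf_eq, not_forall]
  exact ⟨U, hU, hy, hμU⟩

/-- The complement of the support is null for the weighted measure. -/
lemma measure_compl_densSupport (h : ℝ → ℝ) :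
    (volume.withDensity fun y => ENNReal.ofReal (h y)) (densSupport h)ᶜ = 0 := by
  apply measure_null_of_locally_null
  intro x hx
  simp only [densSupport, mem_compl_iff, mem_setOf_eq, not_forall] at hx
  obtain ⟨U, hU, hxU, hμU⟩ := hx
  refine ⟨U, nhdsWithin_le_nhds (hU.mem_nhds hxU), ?_⟩
  simpa using hμU

/-- (Bonnet–Myers for one-dimensional `MCP(K,N)` densities, `K > 0`.)
The support of an `MCP(K,N)` density has diameter at most `π·√((N−1)/K)`. -/
theorem mcp_density_diam_le (K N : ℝ) (hK : 0 < K) (hN : 1 < N) (h : ℝ → ℝ)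
    (hh : IsMCPDensity K N h) :
    ∀ x₀ ∈ densSupport h, ∀ x₁ ∈ densSupport h,
      |x₁ - x₀| ≤ Real.pi * Real.sqrt ((N - 1) / K) := by
  obtain ⟨hpos, hloc, hmcp⟩ := hh
  set D := Real.pi * Real.sqrt ((N - 1) / K) with hD
  have hD0 : 0 ≤ D := mul_nonneg Real.pi_pos.le (Real.sqrt_nonneg _)
  set μ := volume.withDensity fun y => ENNReal.ofReal (h y) with hμdef
  -- Step 1: two support points more than D apart force h = 0 at the first.
  have key : ∀ y₀ ∈ densSupport h, ∀ y₁ ∈ densSupport h,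
      D < |y₁ - y₀| → h y₀ = 0 := by
    intro y₀ hy₀ y₁ hy₁ hd
    have hspec := hmcp y₀ hy₀ y₁ hy₁ 0 ⟨le_refl 0, zero_le_one⟩
    have hcond : Real.pi ^ 2 * (N - 1) ≤ K * |y₁ - y₀| ^ 2 := by
      have hsq : D ^ 2 ≤ |y₁ - y₀| ^ 2 := by
        apply pow_le_pow_left₀ hD0 hd.le
      have hDval : D ^ 2 = Real.pi ^ 2 * ((N - 1) / K) := by
        rw [hD, mul_pow, Real.sq_sqrt (div_nonneg (by linarith) hK.le)]
      have : K * D ^ 2 ≤ K * |y₁ - y₀| ^ 2 := by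
        exact mul_le_mul_of_nonneg_left hsq hK.le
      calc Real.pi ^ 2 * (N - 1) = K * D ^ 2 := by
            rw [hDval]; field_simp
        _ ≤ K * |y₁ - y₀| ^ 2 := this
    have hsig : sigmaCoeff K N (1 - 0) |y₁ - y₀| = ⊤ := by
      unfold sigmaCoeff; rw [if_pos hcond]
    rw [hsig] at hspec
    have htop : (⊤ : ENNReal) ^ (N - 1) = ⊤ :=
      ENNReal.top_rpow_of_pos (by linarith)
    rw [htop] at hspec
    have hpt : (1 - (0:ℝ)) * y₀ + 0 * y₁ = y₀ := by ring
    rw [hpt] at hspec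
    by_contra hne
    have hpos0 : 0 < h y₀ := lt_of_le_of_ne (hpos y₀) (Ne.symm hne)
    have h0 : ENNReal.ofReal (h y₀) ≠ 0 := by
      simp [ENNReal.ofReal_eq_zero, not_le, hpos0]
    rw [ENNReal.top_mul h0] at hspec
    exact (ENNReal.ofReal_ne_top) (top_le_iff.mp hspec)
  -- Step 2: near any support point there is a support point with positive density.
  have near : ∀ x ∈ densSupport h, ∀ ε : ℝ, 0 < ε →
      ∃ y ∈ densSupport h, |y - x| < ε ∧ 0 < h y := by
    intro x hx ε hε
    by_contra hcon
    push_neg at hcon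
    have hball : 0 < μ (Metric.ball x ε) :=
      hx _ Metric.isOpen_ball (Metric.mem_ball_self hε)
    have hs_meas : MeasurableSet (Metric.ball x ε ∩ densSupport h) :=
      measurableSet_ball.inter (by simpa using (isOpen_compl_densSupport h).isClosed_compl.measurableSet)
    have hzero : μ (Metric.ball x ε ∩ densSupport h) = 0 := by
      rw [hμdef, withDensity_apply _ hs_meas]
      have : ∀ᵐ y ∂(volume.restrict (Metric.ball x ε ∩ densSupport h)),
          ENNReal.ofReal (h y) = 0 := by
        filter_upwards [ae_restrict_mem hs_meas] with y hy
        have hy0 : h y = 0 := by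
          have := hcon y hy.2 (by simpa [Real.dist_eq] using hy.1)
          exact le_antisymm this (hpos y)
        simp [hy0]
      rw [lintegral_congr_ae this, lintegral_zero]
    have : μ (Metric.ball x ε) ≤
        μ (Metric.ball x ε ∩ densSupport h) + μ (densSupport h)ᶜ := by
      apply le_trans (measure_mono _) (measure_union_le _ _)
      intro y hy
      by_cases hyS : y ∈ densSupport h
      · exact Or.inl ⟨hy, hyS⟩
      · exact Or.inr hyS
    rw [hzero, measure_compl_densSupport h] at this
    simp only [add_zero, nonpos_iff_eq_zero] at this
    exact absurd this hball.ne'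
  -- Conclusion.
  intro x₀ hx₀ x₁ hx₁
  by_contra hgt
  push_neg at hgt
  obtain ⟨y₀, hy₀, hy₀near, hy₀pos⟩ := near x₀ hx₀ (|x₁ - x₀| - D) (by linarith)
  have hdist : D < |x₁ - y₀| := by
    have h1 : |x₁ - x₀| ≤ |x₁ - y₀| + |y₀ - x₀| := abs_sub_le _ _ _
    linarith
  exact absurd (key y₀ hy₀ x₁ hx₁ hdist) hy₀pos.ne'
end

section
/- Define h : ℝ → [0,∞) by h(x) := 1 + |x| for x ∈ [−1,1] and h(x) := 0 otherwise. Then h is a QCD(2,0,2) density, but for no K' ∈ ℝ and N' ∈ (1,∞) is h a CD(K',N') density. -/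
open MeasureTheory Filter Set
open scoped ENNReal NNReal Topology

/-- The example density. -/
noncomputable abbrev hEx : ℝ → ℝ := fun x : ℝ => if |x| ≤ 1 then 1 + |x| else 0

lemma hEx_of_mem {x : ℝ} (hx : x ∈ Icc (-1:ℝ) 1) : hEx x = 1 + |x| :=
  if_pos (abs_le.2 ⟨hx.1, hx.2⟩)

lemma densSupport_hEx : densSupport hEx = Icc (-1 : ℝ) 1 := by
  have hmeas : Measurable fun y : ℝ => ENNReal.ofReal (hEx y) := by
    apply Measurable.ennreal_ofReal
    unfold hEx
    exact Measurable.ite (measurableSet_le (by measurability) measurable_const)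
      (by measurability) measurable_const
  ext x
  simp only [densSupport, mem_setOf_eq]
  constructor
  · intro hx
    by_contra hx'
    have h1 : 1 < |x| := by
      rcases not_and_or.1 (fun h => hx' ⟨h.1, h.2⟩ : ¬(-1 ≤ x ∧ x ≤ 1)) with h | h
      · exact lt_of_lt_of_le (by linarith [not_le.1 h]) (neg_le_abs x)
      · exact lt_of_lt_of_le (not_le.1 h) (le_abs_self x)
    have hU : IsOpen {y : ℝ | 1 < |y|} := isOpen_lt continuous_const continuous_abs
    have := hx _ hU h1
    rw [withDensity_apply _ hU.measurableSet] at this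
    have hz : ∫⁻ y in {y : ℝ | 1 < |y|}, ENNReal.ofReal (hEx y)
        = ∫⁻ _ in {y : ℝ | 1 < |y|}, (0:ENNReal) :=
      setLIntegral_congr_fun hU.measurableSet
        (by intro y (hy : 1 < |y|)
            simp only [hEx, if_neg (not_le.2 hy), ENNReal.ofReal_zero])
    rw [hz, lintegral_zero] at this
    exact lt_irrefl 0 this
  · intro hx U hU hxU
    obtain ⟨δ, hδ, hball⟩ := Metric.isOpen_iff.1 hU x hxU
    set a := max (x - δ) (-1) with ha
    set b := min (x + δ) 1 with hb
    have hab : a < b := by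
      rw [ha, hb]
      rcases hx with ⟨h1, h2⟩
      refine max_lt (lt_min (by linarith) (by linarith)) (lt_min (by linarith) (by linarith))
    have hIU : Ioo a b ⊆ U := by
      intro y hy
      apply hball
      rw [Metric.mem_ball, Real.dist_eq, abs_lt]
      constructor
      · have := hy.1; have : x - δ < y := lt_of_le_of_lt (le_max_left _ _) hy.1; linarith
      · have : y < x + δ := lt_of_lt_of_le hy.2 (min_le_left _ _); linarith
    have hI1 : Ioo a b ⊆ Icc (-1:ℝ) 1 := by
      intro y hy
      exact ⟨le_of_lt (lt_of_le_of_lt (le_max_right _ _) hy.1),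
        le_of_lt (lt_of_lt_of_le hy.2 (min_le_right _ _))⟩
    rw [withDensity_apply _ hU.measurableSet]
    calc (0:ENNReal) < volume (Ioo a b) := by
            rw [Real.volume_Ioo]; exact ENNReal.ofReal_pos.2 (by linarith)
      _ = ∫⁻ _ in Ioo a b, 1 := (setLIntegral_one _).symm
      _ ≤ ∫⁻ y in Ioo a b, ENNReal.ofReal (hEx y) := by
            apply setLIntegral_mono hmeas
            intro y hy
            rw [hEx_of_mem (hI1 hy)]
            exact ENNReal.one_le_ofReal.2 (le_add_of_nonneg_right (abs_nonneg y))
      _ ≤ ∫⁻ y in U, ENNReal.ofReal (hEx y) := lintegral_mono_set hIU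

lemma sigma_zero (s θ : ℝ) (hs : 0 ≤ s) : sigmaCoeff 0 2 s θ = ENNReal.ofReal s := by
  unfold sigmaCoeff
  have hpi : ¬ (Real.pi ^ 2 * (2 - 1) ≤ 0 * θ ^ 2) := by
    rw [zero_mul]
    push_neg
    nlinarith [Real.pi_pos]
  rw [if_neg hpi]
  by_cases hθ : θ = 0
  · rw [if_pos hθ]
  · rw [if_neg hθ]
    unfold sOf
    norm_num
    rw [mul_div_assoc, div_self hθ, mul_one]

lemma contra_of (σ : ENNReal) (r X : ℝ) (hσ : σ = ENNReal.ofReal r) (hr : 0 ≤ r)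
    (hX : 1 < 2 * (r * X)) :
    ¬ (σ * ENNReal.ofReal X + σ * ENNReal.ofReal X ≤ ENNReal.ofReal 1) := by
  intro hle
  rw [hσ, ← ENNReal.ofReal_mul hr] at hle
  have h2 : ENNReal.ofReal (r * X + r * X) ≤ ENNReal.ofReal 1 :=
    le_trans ENNReal.ofReal_add_le hle
  rw [ENNReal.ofReal_le_ofReal_iff zero_le_one] at h2
  linarith

lemma contra_top (σ : ENNReal) (X : ℝ) (hσ : σ = ⊤) (hX : 0 < X) :
    ¬ (σ * ENNReal.ofReal X + σ * ENNReal.ofReal X ≤ ENNReal.ofReal 1) := by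
  intro hle
  rw [hσ, ENNReal.top_mul (ENNReal.ofReal_pos.2 hX).ne', top_add] at hle
  exact (ENNReal.ofReal_lt_top).not_ge hle

lemma key (K' N' : ℝ) (hN' : 1 < N') :
    ∃ a : ℝ, 0 < a ∧ a ≤ 1 ∧
      ¬ (sigmaCoeff K' N' (1/2) (2*a) * ENNReal.ofReal ((1+a) ^ ((1:ℝ)/(N'-1))) +
         sigmaCoeff K' N' (1/2) (2*a) * ENNReal.ofReal ((1+a) ^ ((1:ℝ)/(N'-1))) ≤
         ENNReal.ofReal 1) := by
  have hN1 : (0:ℝ) < N' - 1 := by linarith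
  set p : ℝ := 1/(N'-1) with hpdef
  have hp0 : 0 < p := by positivity
  have hpi := Real.pi_pos
  rcases lt_trichotomy K' 0 with hK | hK | hK
  · -- K' < 0 : use derivative argument
    have hκ : K'/(N'-1) < 0 := div_neg_of_neg_of_pos hK hN1
    set c : ℝ := Real.sqrt (-(K'/(N'-1))) with hcdef
    have hc : 0 < c := Real.sqrt_pos.2 (by linarith)
    have hsOf : ∀ y, sOf (K'/(N'-1)) y = Real.sinh (c*y)/c := fun y => by
      unfold sOf
      rw [if_neg (not_lt.2 hκ.le), if_neg hκ.ne]
    -- derivative argument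
    set F : ℝ → ℝ := fun a => (1+a)^p - Real.cosh (c*a) with hFdef
    have hF1 : HasDerivAt (fun a : ℝ => (1+a)^p) (p * (1+(0:ℝ))^(p-1) * 1) 0 := by
      have hout : HasDerivAt (fun x : ℝ => x ^ p) (p * (1+(0:ℝ))^(p-1)) (1+(0:ℝ)) :=
        Real.hasDerivAt_rpow_const (Or.inl (by norm_num))
      exact HasDerivAt.comp 0 hout ((hasDerivAt_id 0).const_add 1)
    have hF2 : HasDerivAt (fun a : ℝ => Real.cosh (c*a)) (Real.sinh (c*0) * (c*1)) 0 :=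
      HasDerivAt.comp 0 (Real.hasDerivAt_cosh (c*0)) ((hasDerivAt_id 0).const_mul c)
    have hF : HasDerivAt F p 0 := by
      have := hF1.sub hF2
      have heq : p * (1+(0:ℝ))^(p-1) * 1 - Real.sinh (c*0) * (c*1) = p := by
        norm_num [Real.one_rpow, Real.sinh_zero]
      rwa [heq] at this
    have hslope : Tendsto (slope F 0) (𝓝[>] 0) (𝓝 p) :=
      (hasDerivAt_iff_tendsto_slope.1 hF).mono_left
        (nhdsWithin_mono 0 (fun x hx => ne_of_gt hx))
    have ev1 : ∀ᶠ a in 𝓝[>] (0:ℝ), 0 < slope F 0 a := (tendsto_order.1 hslope).1 0 hp0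
    have ev2 : Ioc (0:ℝ) 1 ∈ 𝓝[>] (0:ℝ) := Ioc_mem_nhdsGT_of_mem ⟨le_refl 0, one_pos⟩
    obtain ⟨a, hsl, ha0, ha1⟩ := (ev1.and ev2).exists
    have hF0 : F 0 = 0 := by simp [hFdef, Real.one_rpow, Real.cosh_zero]
    have hFa : 0 < F a := by
      rw [slope_def_field, hF0, sub_zero, sub_zero] at hsl
      have := mul_pos hsl ha0
      rwa [div_mul_cancel₀ _ (ne_of_gt ha0)] at this
    have hcosh : Real.cosh (c*a) < (1+a)^p := by
      have : (1+a)^p - Real.cosh (c*a) > 0 := hFa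
      linarith
    refine ⟨a, ha0, ha1, ?_⟩
    have hg : ¬ (Real.pi ^ 2 * (N' - 1) ≤ K' * (2*a) ^ 2) := by
      push_neg
      have h1 : 0 < Real.pi ^ 2 * (N'-1) := mul_pos (pow_pos hpi 2) hN1
      have h2 : K' * (2*a)^2 ≤ 0 := mul_nonpos_of_nonpos_of_nonneg hK.le (sq_nonneg _)
      linarith
    have hsp : 0 < Real.sinh (c*a) := Real.sinh_pos_iff.2 (mul_pos hc ha0)
    have hch : 0 < Real.cosh (c*a) := Real.cosh_pos _
    apply contra_of _ (1/(2*Real.cosh (c*a))) _ _ (by positivity)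
    · rw [hpdef]
      have hrw : 2 * (1/(2*Real.cosh (c*a)) * (1+a)^(1/(N'-1))) =
          (1+a)^(1/(N'-1)) / Real.cosh (c*a) := by
        field_simp
      rw [hrw]
      exact (one_lt_div hch).2 (by rw [← hpdef]; exact hcosh)
    · unfold sigmaCoeff
      rw [if_neg hg, if_neg (by positivity : (2*a:ℝ) ≠ 0), hsOf, hsOf,
        show (1/2 : ℝ) * (2*a) = a by ring,
        show c * (2*a) = 2*(c*a) by ring, Real.sinh_two_mul]
      congr 1
      field_simp
  · -- K' = 0
    refine ⟨1, one_pos, le_refl 1, ?_⟩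
    have hg : ¬ (Real.pi ^ 2 * (N' - 1) ≤ K' * (2*1) ^ 2) := by
      rw [hK]; push_neg
      have h1 : 0 < Real.pi ^ 2 * (N'-1) := mul_pos (pow_pos hpi 2) hN1
      linarith
    apply contra_of _ (1/2) _ _ (by norm_num)
    · have h2 : (1:ℝ) < (1+1)^p :=
        (Real.one_lt_rpow_iff_of_pos (by norm_num)).2 (Or.inl ⟨by norm_num, hp0⟩)
      rw [hpdef] at h2 ⊢
      linarith
    · unfold sigmaCoeff
      rw [if_neg hg, if_neg (by norm_num : (2*1:ℝ) ≠ 0)]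
      have h0 : K'/(N'-1) = 0 := by rw [hK, zero_div]
      rw [h0]
      unfold sOf
      norm_num
  · -- K' > 0
    refine ⟨1, one_pos, le_refl 1, ?_⟩
    by_cases hg : Real.pi ^ 2 * (N' - 1) ≤ K' * (2*1) ^ 2
    · apply contra_top _ _ _ (Real.rpow_pos_of_pos (by norm_num) _)
      unfold sigmaCoeff
      rw [if_pos hg]
    · have hκ : 0 < K'/(N'-1) := div_pos hK hN1
      set c : ℝ := Real.sqrt (K'/(N'-1)) with hcdef
      have hc : 0 < c := Real.sqrt_pos.2 hκ
      have hc2 : (2*c)^2 < Real.pi ^ 2 := by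
        push_neg at hg
        have h4 : K' * (2*1)^2 = 4 * ((K'/(N'-1)) * (N'-1)) := by field_simp; ring
        have hsq : c^2 = K'/(N'-1) := Real.sq_sqrt hκ.le
        nlinarith
      have hcpi : 2*c < Real.pi := lt_of_pow_lt_pow_left₀ 2 hpi.le hc2
      have hsOf : ∀ y, sOf (K'/(N'-1)) y = Real.sin (c*y)/c := fun y => by
        unfold sOf
        rw [if_pos hκ]
      have hs1 : 0 < Real.sin c := Real.sin_pos_of_pos_of_lt_pi hc (by linarith)
      have hco : 0 < Real.cos c :=
        Real.cos_pos_of_mem_Ioo ⟨by linarith, by linarith⟩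
      have hco1 : Real.cos c ≤ 1 := Real.cos_le_one c
      have h2 : (1:ℝ) < (1+1)^p :=
        (Real.one_lt_rpow_iff_of_pos (by norm_num)).2 (Or.inl ⟨by norm_num, hp0⟩)
      apply contra_of _ (1/(2*Real.cos c)) _ _ (by positivity)
      · rw [hpdef]
        have hrw : 2 * (1/(2*Real.cos c) * (1+1)^((1:ℝ)/(N'-1))) =
            (1+1)^((1:ℝ)/(N'-1)) / Real.cos c := by field_simp
        rw [hrw]
        refine (one_lt_div hco).2 ?_
        rw [hpdef] at h2
        linarith
      · unfold sigmaCoeff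
        rw [if_neg hg, if_neg (by norm_num : (2*1:ℝ) ≠ 0), hsOf, hsOf,
          show (1/2 : ℝ) * (2*1) = 1 by ring,
          show c * (2*1) = 2*c by ring, Real.sin_two_mul, show c*1 = c by ring]
        congr 1
        field_simp

/-- The density `h(x) = (1+|x|)·1_{[-1,1]}(x)` is a `QCD(2,0,2)` density
but is not a `CD(K',N')` density for any `K' ∈ ℝ` and `N' ∈ (1,∞)`. -/
theorem qcd_example_not_cd :
    IsQCDDensity 2 0 2 (fun x : ℝ => if |x| ≤ 1 then 1 + |x| else 0) ∧
    ∀ K' N' : ℝ, 1 < N' →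
      ¬ IsCDDensity K' N' (fun x : ℝ => if |x| ≤ 1 then 1 + |x| else 0) := by
  constructor
  · refine ⟨fun x => by dsimp only; split <;> positivity, ?_, ?_⟩
    · rw [show densSupport (fun x : ℝ => if |x| ≤ 1 then 1 + |x| else 0) = Icc (-1:ℝ) 1 from
        densSupport_hEx]
      exact ContinuousOn.congr (by fun_prop) (fun x hx => (hEx_of_mem hx))
    · rw [show densSupport (fun x : ℝ => if |x| ≤ 1 then 1 + |x| else 0) = Icc (-1:ℝ) 1 from
        densSupport_hEx]
      intro x₀ hx₀ x₁ hx₁ t ht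
      have e1 : (1:ℝ)/(2-1) = 1 := by norm_num
      rw [e1, sigma_zero _ _ (by linarith [ht.2]), sigma_zero _ _ (le_of_lt ht.1)]
      have hc : (1-t)*x₀ + t*x₁ ∈ Icc (-1:ℝ) 1 := by
        obtain ⟨h0l, h0r⟩ := hx₀; obtain ⟨h1l, h1r⟩ := hx₁
        obtain ⟨htl, htr⟩ := ht
        constructor <;> nlinarith
      have hv : ∀ y ∈ Icc (-1:ℝ) 1,
          (if |y| ≤ 1 then 1 + |y| else (0:ℝ)) = 1 + |y| :=
        fun y hy => if_pos (abs_le.2 ⟨hy.1, hy.2⟩)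
      simp only [Real.rpow_one]
      rw [hv _ hx₀, hv _ hx₁, hv _ hc]
      rw [← ENNReal.ofReal_mul (by linarith [ht.2]), ← ENNReal.ofReal_mul (le_of_lt ht.1),
        ← ENNReal.ofReal_add (by nlinarith [abs_nonneg x₀, ht.2]) (by nlinarith [abs_nonneg x₁, ht.1]),
        ← ENNReal.ofReal_mul (by positivity)]
      apply ENNReal.ofReal_le_ofReal
      have h2 : (2:ℝ) ^ (-(1:ℝ)) = 1/2 := by
        rw [show (-(1:ℝ)) = ((-1 : ℤ) : ℝ) by norm_num, Real.rpow_intCast]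
        norm_num
      rw [h2]
      have a0 : |x₀| ≤ 1 := abs_le.2 ⟨hx₀.1, hx₀.2⟩
      have a1 : |x₁| ≤ 1 := abs_le.2 ⟨hx₁.1, hx₁.2⟩
      have ac : (0:ℝ) ≤ |(1-t)*x₀ + t*x₁| := abs_nonneg _
      obtain ⟨htl, htr⟩ := ht
      nlinarith
  · intro K' N' hN' hCD
    obtain ⟨-, -, hineq⟩ := hCD
    obtain ⟨a, ha0, ha1, hcon⟩ := key K' N' hN'
    rw [show densSupport (fun x : ℝ => if |x| ≤ 1 then 1 + |x| else 0) = Icc (-1:ℝ) 1 from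
      densSupport_hEx] at hineq
    have hm0 : -a ∈ Icc (-1:ℝ) 1 := ⟨by linarith, by linarith⟩
    have hm1 : a ∈ Icc (-1:ℝ) 1 := ⟨by linarith, by linarith⟩
    have h := hineq (-a) hm0 a hm1 (1/2) ⟨by norm_num, by norm_num⟩
    have e1 : |a - -a| = 2*a := by
      rw [show a - -a = 2*a by ring]; exact abs_of_pos (by linarith)
    have e0 : ((1:ℝ) - 1/2) * (-a) + (1/2)*a = 0 := by ring
    rw [e0, e1] at h
    simp only [show ((1:ℝ) - 1/2) = 1/2 from by norm_num, Real.one_rpow,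
      ENNReal.ofReal_one, one_mul, abs_zero, abs_neg, abs_of_pos ha0, if_pos ha1] at h
    rw [show (if (0:ℝ) ≤ 1 then 1 + (0:ℝ) else 0) = 1 by norm_num, Real.one_rpow] at h
    exact hcon h
end

section
/- Let p ∈ (1,∞), let μ be a finite nonzero measure on a measurable space, and let f be a real-valued function with f ∈ L^p(μ). Then the function ℝ ∋ c ↦ ∫ |f − c|^p dμ attains a unique minimum at some c* ∈ ℝ, and c* is the unique real number satisfying ∫ |f − c*|^{p−2}·(f − c*) dμ = 0. -/
open MeasureTheory Real Filter Set

/-! Auxiliary lemmas about the function `φ s = |s| ^ (p-2) * s`. -/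

private lemma phi_nonneg_eq {p : ℝ} (hp : 1 < p) {s : ℝ} (hs : 0 ≤ s) :
    |s| ^ (p - 2) * s = s ^ (p - 1) := by
  rcases eq_or_lt_of_le hs with h | h
  · simp [← h, Real.zero_rpow (by linarith : p - 1 ≠ 0)]
  · rw [abs_of_pos h, show p - 1 = (p - 2) + 1 by ring, Real.rpow_add_one h.ne']

private lemma phi_neg_eq {p : ℝ} (hp : 1 < p) {s : ℝ} (hs : s ≤ 0) :
    |s| ^ (p - 2) * s = -((-s) ^ (p - 1)) := by
  have h := phi_nonneg_eq hp (neg_nonneg.2 hs)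
  rw [abs_neg] at h
  rw [← h]; ring

private lemma phi_abs {p : ℝ} (hp : 1 < p) (s : ℝ) :
    |(|s| ^ (p - 2) * s)| = |s| ^ (p - 1) := by
  have h := phi_nonneg_eq hp (abs_nonneg s)
  rw [abs_abs] at h
  rw [abs_mul, Real.abs_rpow_of_nonneg (abs_nonneg s), abs_abs, h]

private lemma phi_strictMono {p : ℝ} (hp : 1 < p) :
    StrictMono (fun s : ℝ => |s| ^ (p - 2) * s) := by
  have hp1 : (0:ℝ) < p - 1 := by linarith
  have key : ∀ s t : ℝ, 0 ≤ s → s < t → |s| ^ (p - 2) * s < |t| ^ (p - 2) * t := by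
    intro s t hs hst
    rw [phi_nonneg_eq hp hs, phi_nonneg_eq hp (hs.trans hst.le)]
    exact Real.rpow_lt_rpow hs hst hp1
  intro s t hst
  show |s| ^ (p - 2) * s < |t| ^ (p - 2) * t
  rcases le_or_gt 0 s with hs | hs
  · exact key s t hs hst
  rcases le_or_gt t 0 with ht | ht
  · have := key (-t) (-s) (neg_nonneg.2 ht) (by linarith)
    simp only [abs_neg, mul_neg] at this
    linarith
  · have h1 : |s| ^ (p - 2) * s < 0 :=
      mul_neg_of_pos_of_neg (Real.rpow_pos_of_pos (abs_pos.2 hs.ne) _) hs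
    have h2 : 0 < |t| ^ (p - 2) * t :=
      mul_pos (Real.rpow_pos_of_pos (abs_pos.2 ht.ne') _) ht
    linarith

private lemma abs_rpow_tendsto {p : ℝ} (hp : 1 < p) :
    Tendsto (fun s : ℝ => |s| ^ (p - 1)) (nhds 0) (nhds 0) := by
  have h1 : Tendsto (fun s : ℝ => |s|) (nhds 0) (nhds 0) := by
    simpa using continuous_abs.tendsto (0:ℝ)
  have h2 := ((Real.continuousAt_rpow_const 0 (p - 1)
    (Or.inr (by linarith))).tendsto).comp h1
  simpa [Function.comp_def, Real.zero_rpow (show p - 1 ≠ 0 by linarith)] using h2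

private lemma phi_continuous {p : ℝ} (hp : 1 < p) :
    Continuous (fun s : ℝ => |s| ^ (p - 2) * s) := by
  rw [continuous_iff_continuousAt]
  intro s
  rcases eq_or_ne s 0 with rfl | hs
  · have h0 : Tendsto (fun s : ℝ => |s| ^ (p - 2) * s) (nhds 0) (nhds 0) := by
      apply squeeze_zero_norm (a := fun s : ℝ => |s| ^ (p - 1))
      · intro t; rw [Real.norm_eq_abs, phi_abs hp]
      · exact abs_rpow_tendsto hp
    have hCA : ContinuousAt (fun s : ℝ => |s| ^ (p - 2) * s) 0 := by
      unfold ContinuousAt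
      simpa using h0
    exact hCA
  · exact ((Real.continuousAt_rpow_const _ _ (Or.inl (abs_ne_zero.2 hs))).comp
      continuous_abs.continuousAt).mul continuousAt_id

/-- Strict tangent-line inequality for `|·| ^ p`. -/
private lemma tangent_lt {p : ℝ} (hp : 1 < p) {a b : ℝ} (hab : a ≠ b) :
    |b| ^ p + p * (|b| ^ (p - 2) * b) * (a - b) < |a| ^ p := by
  have hp0 : (0:ℝ) < p := by linarith
  have hcont : Continuous (fun t : ℝ => |t| ^ p) :=
    continuous_abs.rpow_const (fun _ => Or.inr hp0.le)
  have hderiv : ∀ x : ℝ, HasDerivAt (fun t : ℝ => |t| ^ p) (p * (|x| ^ (p - 2) * x)) x := by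
    intro x
    have := hasDerivAt_abs_rpow x hp
    convert this using 1
    ring
  rcases lt_or_gt_of_ne hab with h | h
  · obtain ⟨ξ, hξ, hs⟩ := exists_hasDerivAt_eq_slope (fun t : ℝ => |t| ^ p)
      (fun t => p * (|t| ^ (p - 2) * t)) h hcont.continuousOn (fun x _ => hderiv x)
    have hba : (0:ℝ) < b - a := by linarith
    have heq : |b| ^ p - |a| ^ p = p * (|ξ| ^ (p - 2) * ξ) * (b - a) := by
      field_simp at hs; linarith
    have hmono : |ξ| ^ (p - 2) * ξ < |b| ^ (p - 2) * b := phi_strictMono hp hξ.2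
    nlinarith [mul_pos (mul_pos hp0 (sub_pos.2 hmono)) hba]
  · obtain ⟨ξ, hξ, hs⟩ := exists_hasDerivAt_eq_slope (fun t : ℝ => |t| ^ p)
      (fun t => p * (|t| ^ (p - 2) * t)) h hcont.continuousOn (fun x _ => hderiv x)
    have hab' : (0:ℝ) < a - b := by linarith
    have heq : |a| ^ p - |b| ^ p = p * (|ξ| ^ (p - 2) * ξ) * (a - b) := by
      field_simp at hs; linarith
    have hmono : |b| ^ (p - 2) * b < |ξ| ^ (p - 2) * ξ := phi_strictMono hp hξ.1
    nlinarith [mul_pos (mul_pos hp0 (sub_pos.2 hmono)) hab']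

private lemma integral_pos_of_pos {α : Type*} [MeasurableSpace α] {μ : Measure α} (hμ : μ ≠ 0)
    {h : α → ℝ} (hint : Integrable h μ) (hpos : ∀ x, 0 < h x) : 0 < ∫ x, h x ∂μ := by
  rw [integral_pos_iff_support_of_nonneg_ae
    (Filter.Eventually.of_forall fun x => (hpos x).le) hint]
  have hsupp : Function.support h = Set.univ := Set.eq_univ_of_forall fun x => (hpos x).ne'
  rw [hsupp]
  exact Measure.measure_univ_pos.mpr hμ

private lemma int1 {α : Type*} [MeasurableSpace α] {μ : Measure α} [IsFiniteMeasure μ]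
    {p : ℝ} (hp : 1 < p) {f : α → ℝ} (hf : MemLp f (ENNReal.ofReal p) μ) (c : ℝ) :
    Integrable (fun x => |f x - c| ^ p) μ := by
  have h := (hf.sub (memLp_const c)).integrable_norm_rpow
    (by simp [ENNReal.ofReal_eq_zero]; linarith) (by simp)
  simpa [Real.norm_eq_abs, ENNReal.toReal_ofReal (by linarith : (0:ℝ) ≤ p)] using h

private lemma int2 {α : Type*} [MeasurableSpace α] {μ : Measure α} [IsFiniteMeasure μ]
    {p : ℝ} (hp : 1 < p) {f : α → ℝ} (hf : MemLp f (ENNReal.ofReal p) μ) (c : ℝ) :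
    Integrable (fun x => |f x - c| ^ (p - 2) * (f x - c)) μ := by
  have hq : MemLp (fun x => f x - c) (ENNReal.ofReal (p - 1)) μ :=
    (hf.sub (memLp_const c)).mono_exponent (ENNReal.ofReal_le_ofReal (by linarith))
  have h := hq.integrable_norm_rpow (by simp [ENNReal.ofReal_eq_zero]; linarith) (by simp)
  rw [ENNReal.toReal_ofReal (by linarith : (0:ℝ) ≤ p - 1)] at h
  refine h.mono' ((phi_continuous hp).comp_aestronglyMeasurable
    (hf.1.sub aestronglyMeasurable_const)) ?_
  filter_upwards with x
  rw [Real.norm_eq_abs, phi_abs hp, Real.norm_eq_abs]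

private lemma contG {α : Type*} [MeasurableSpace α] (μ : Measure α) [IsFiniteMeasure μ]
    {p : ℝ} (hp : 1 < p) {f : α → ℝ} (hf : MemLp f (ENNReal.ofReal p) μ) :
    Continuous (fun c : ℝ => ∫ x, |f x - c| ^ (p - 2) * (f x - c) ∂μ) := by
  rw [continuous_iff_continuousAt]
  intro c₀
  have hbint : Integrable (fun x => (|f x| + (|c₀| + 1)) ^ (p - 1)) μ := by
    have hm : MemLp (fun x => |f x| + (|c₀| + 1)) (ENNReal.ofReal p) μ := by
      have := hf.norm.add (memLp_const (|c₀| + 1)); simp only [Real.norm_eq_abs] at this; exact this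
    have hq := hm.mono_exponent (ENNReal.ofReal_le_ofReal (by linarith : p - 1 ≤ p))
    have h := hq.integrable_norm_rpow (by simp [ENNReal.ofReal_eq_zero]; linarith) (by simp)
    rw [ENNReal.toReal_ofReal (by linarith : (0:ℝ) ≤ p - 1)] at h
    refine h.congr (Filter.Eventually.of_forall fun x => ?_)
    simp only [Real.norm_eq_abs]
    rw [abs_of_nonneg (by positivity : (0:ℝ) ≤ |f x| + (|c₀| + 1))]
  apply continuousAt_of_dominated (bound := fun x => (|f x| + (|c₀| + 1)) ^ (p - 1))
  · filter_upwards with c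
    exact (phi_continuous hp).comp_aestronglyMeasurable (hf.1.sub aestronglyMeasurable_const)
  · filter_upwards [Metric.ball_mem_nhds c₀ one_pos] with c hc
    filter_upwards with x
    rw [Real.norm_eq_abs, phi_abs hp]
    apply Real.rpow_le_rpow (abs_nonneg _) _ (by linarith : (0:ℝ) ≤ p - 1)
    have h1 : |f x - c| ≤ |f x| + |c| := by
      have := abs_add_le (f x) (-c); simpa [sub_eq_add_neg] using this
    have h2 : |c| - |c₀| ≤ |c - c₀| := abs_sub_abs_le_abs_sub _ _
    have h3 : |c - c₀| < 1 := by rwa [Metric.mem_ball, Real.dist_eq] at hc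
    linarith
  · exact hbint
  · filter_upwards with x
    exact ((phi_continuous hp).comp (continuous_const.sub continuous_id)).continuousAt

private lemma existsNeg {α : Type*} [MeasurableSpace α] {μ : Measure α} [IsFiniteMeasure μ]
    (hμ : μ ≠ 0) {p : ℝ} (hp : 1 < p) {f : α → ℝ} (hm : StronglyMeasurable f)
    (hf : MemLp f (ENNReal.ofReal p) μ) :
    ∃ c : ℝ, ∫ x, |f x - c| ^ (p - 2) * (f x - c) ∂μ < 0 := by
  have hBint : Integrable (fun x => |f x| ^ (p - 1)) μ := by
    have hq := hf.mono_exponent (ENNReal.ofReal_le_ofReal (by linarith : p - 1 ≤ p))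
    have h := hq.integrable_norm_rpow (by simp [ENNReal.ofReal_eq_zero]; linarith) (by simp)
    rw [ENNReal.toReal_ofReal (by linarith : (0:ℝ) ≤ p - 1)] at h
    simpa [Real.norm_eq_abs] using h
  set B := ∫ x, |f x| ^ (p - 1) ∂μ with hBdef
  have hB : 0 ≤ B := integral_nonneg fun x => Real.rpow_nonneg (abs_nonneg _) _
  have hex : ∃ n : ℕ, μ {x | f x ≤ (n : ℝ)} ≠ 0 := by
    by_contra hcon
    push_neg at hcon
    have hU : ⋃ n : ℕ, {x | f x ≤ (n : ℝ)} = Set.univ := by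
      apply Set.eq_univ_of_forall
      intro x
      obtain ⟨n, hn⟩ := exists_nat_ge (f x)
      exact Set.mem_iUnion.2 ⟨n, hn⟩
    have hnull := measure_iUnion_null fun n : ℕ => hcon n
    rw [hU] at hnull
    exact (Measure.measure_univ_pos.mpr hμ).ne' hnull
  obtain ⟨n, hn⟩ := hex
  set t : ℝ := (n : ℝ) with htdef
  have ht0 : 0 ≤ t := Nat.cast_nonneg n
  set A := {x | f x ≤ t} with hAdef
  have hAmeas : MeasurableSet A := hm.measurable measurableSet_Iic
  set m := (μ A).toReal with hmdef
  have hm0 : 0 < m := ENNReal.toReal_pos hn (measure_ne_top μ A)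
  set r : ℝ := ((B + 1) / m) ^ (p - 1)⁻¹ with hrdef
  have hr0 : 0 ≤ r := Real.rpow_nonneg (by positivity) _
  have hrpow : r ^ (p - 1) = (B + 1) / m :=
    Real.rpow_inv_rpow (by positivity) (by linarith : p - 1 ≠ 0)
  set c : ℝ := t + r with hcdef
  have hc0 : 0 ≤ c := by positivity
  refine ⟨c, ?_⟩
  have hint := int2 hp hf c
  rw [← integral_add_compl hAmeas hint]
  have hIA : ∫ x in A, |f x - c| ^ (p - 2) * (f x - c) ∂μ ≤ m * (-(r ^ (p - 1))) := by
    have hle : ∀ x ∈ A, |f x - c| ^ (p - 2) * (f x - c) ≤ -(r ^ (p - 1)) := by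
      intro x hx
      have hfx : f x - c ≤ -r := by
        have : f x ≤ t := hx
        simp only [hcdef]; linarith
      have h1 : |f x - c| ^ (p - 2) * (f x - c) ≤ |(-r)| ^ (p - 2) * (-r) :=
        (phi_strictMono hp).monotone hfx
      have h2 : |(-r)| ^ (p - 2) * (-r) = -((- -r) ^ (p - 1)) := phi_neg_eq hp (by linarith)
      rw [h2] at h1
      simpa using h1
    calc ∫ x in A, |f x - c| ^ (p - 2) * (f x - c) ∂μ
        ≤ ∫ _x in A, -(r ^ (p - 1)) ∂μ :=
          setIntegral_mono_on hint.integrableOn (integrableOn_const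
            (measure_ne_top μ A)) hAmeas hle
      _ = m * (-(r ^ (p - 1))) := by rw [setIntegral_const, smul_eq_mul]; rfl
  have hIAc : ∫ x in Aᶜ, |f x - c| ^ (p - 2) * (f x - c) ∂μ ≤ B := by
    have hle : ∀ x, |f x - c| ^ (p - 2) * (f x - c) ≤ |f x| ^ (p - 1) := by
      intro x
      have h1 : |f x - c| ^ (p - 2) * (f x - c) ≤ |f x| ^ (p - 2) * f x :=
        (phi_strictMono hp).monotone (by linarith)
      have h2 : |f x| ^ (p - 2) * f x ≤ |f x| ^ (p - 1) := by
        rw [← phi_abs hp]; exact le_abs_self _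
      linarith
    calc ∫ x in Aᶜ, |f x - c| ^ (p - 2) * (f x - c) ∂μ
        ≤ ∫ x in Aᶜ, |f x| ^ (p - 1) ∂μ :=
          setIntegral_mono_on hint.integrableOn hBint.integrableOn hAmeas.compl
            (fun x _ => hle x)
      _ ≤ B := setIntegral_le_integral hBint
            (Filter.Eventually.of_forall fun x => Real.rpow_nonneg (abs_nonneg _) _)
  have hfinal : m * (-(r ^ (p - 1))) + B = -1 := by
    rw [hrpow]
    field_simp
    ring
  linarith

private lemma aux_main_s8 {α : Type*} [MeasurableSpace α] (μ : Measure α) [IsFiniteMeasure μ]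
    (hμ : μ ≠ 0) (p : ℝ) (hp : 1 < p) (f : α → ℝ) (hm : StronglyMeasurable f)
    (hf : MemLp f (ENNReal.ofReal p) μ) :
    ∃ c₀ : ℝ,
      (∀ c : ℝ, c ≠ c₀ → ∫ x, |f x - c₀| ^ p ∂μ < ∫ x, |f x - c| ^ p ∂μ) ∧
      (∫ x, |f x - c₀| ^ (p - 2) * (f x - c₀) ∂μ = 0) ∧
      (∀ c : ℝ, (∫ x, |f x - c| ^ (p - 2) * (f x - c) ∂μ = 0) → c = c₀) := by
  set G := fun c : ℝ => ∫ x, |f x - c| ^ (p - 2) * (f x - c) ∂μ with hGdef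
  have hGanti : StrictAnti G := by
    intro c c' hcc'
    have hpos : 0 < ∫ x, (|f x - c| ^ (p - 2) * (f x - c)
        - |f x - c'| ^ (p - 2) * (f x - c')) ∂μ := by
      apply integral_pos_of_pos hμ ((int2 hp hf c).sub (int2 hp hf c'))
      intro x
      exact sub_pos.2 (phi_strictMono hp (by linarith : f x - c' < f x - c))
    rw [integral_sub (f := fun x => |f x - c| ^ (p - 2) * (f x - c))
      (g := fun x => |f x - c'| ^ (p - 2) * (f x - c'))
      (int2 hp hf c) (int2 hp hf c')] at hpos
    simpa [hGdef] using sub_pos.1 (by linarith)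
  obtain ⟨c₂, hc₂⟩ := existsNeg hμ hp hm hf
  obtain ⟨d, hd⟩ := existsNeg hμ hp hm.neg hf.neg
  have hc₁ : 0 < G (-d) := by
    have heq : (∫ x, |(-f) x - d| ^ (p - 2) * ((-f) x - d) ∂μ) = -G (-d) := by
      rw [hGdef, ← integral_neg]
      apply integral_congr_ae
      filter_upwards with x
      have h1 : (-f) x - d = -(f x - (-d)) := by simp only [Pi.neg_apply]; ring
      rw [h1, abs_neg]
      ring
    rw [heq] at hd
    linarith
  set c₁ : ℝ := -d with hc₁def
  have hc₁₂ : c₁ < c₂ := by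
    by_contra hcon
    push_neg at hcon
    rcases eq_or_lt_of_le hcon with h | h
    · rw [h] at hc₂; exact absurd hc₁ (by simp only [hGdef] at hc₂ ⊢; linarith)
    · have := hGanti h; simp only [hGdef] at hc₂ hc₁ this; linarith
  have hGcont : Continuous G := contG μ hp hf
  obtain ⟨c₀, -, hGc₀⟩ := intermediate_value_Icc' hc₁₂.le hGcont.continuousOn
    (Set.mem_Icc.mpr ⟨hc₂.le, hc₁.le⟩)
  refine ⟨c₀, ?_, hGc₀, ?_⟩
  · intro c hc
    have hintC : Integrable (fun x => p * (|f x - c₀| ^ (p - 2) * (f x - c₀)) * (c₀ - c)) μ :=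
      ((int2 hp hf c₀).const_mul p).mul_const (c₀ - c)
    have hpos : 0 < ∫ x, (|f x - c| ^ p - |f x - c₀| ^ p
        - p * (|f x - c₀| ^ (p - 2) * (f x - c₀)) * (c₀ - c)) ∂μ := by
      apply integral_pos_of_pos hμ
      · exact ((int1 hp hf c).sub (int1 hp hf c₀)).sub hintC
      · intro x
        have hab : f x - c ≠ f x - c₀ := by
          intro h; exact hc (by linarith)
        have htan := tangent_lt hp hab
        have hsub : (f x - c) - (f x - c₀) = c₀ - c := by ring
        rw [hsub] at htan
        linarith
    have hsplit : ∫ x, (|f x - c| ^ p - |f x - c₀| ^ p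
        - p * (|f x - c₀| ^ (p - 2) * (f x - c₀)) * (c₀ - c)) ∂μ
        = (∫ x, |f x - c| ^ p ∂μ) - (∫ x, |f x - c₀| ^ p ∂μ)
          - ∫ x, p * (|f x - c₀| ^ (p - 2) * (f x - c₀)) * (c₀ - c) ∂μ := by
      rw [integral_sub (f := fun x => |f x - c| ^ p - |f x - c₀| ^ p)
        (g := fun x => p * (|f x - c₀| ^ (p - 2) * (f x - c₀)) * (c₀ - c))
        ((int1 hp hf c).sub (int1 hp hf c₀)) hintC,
        integral_sub (f := fun x => |f x - c| ^ p) (g := fun x => |f x - c₀| ^ p)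
        (int1 hp hf c) (int1 hp hf c₀)]
    rw [hsplit] at hpos
    have hzero : ∫ x, p * (|f x - c₀| ^ (p - 2) * (f x - c₀)) * (c₀ - c) ∂μ = 0 := by
      rw [integral_mul_const, integral_const_mul]
      have : (∫ x, |f x - c₀| ^ (p - 2) * (f x - c₀) ∂μ) = 0 := hGc₀
      rw [this]
      ring
    rw [hzero] at hpos
    linarith
  · intro c hGc
    exact hGanti.injective (hGc.trans hGc₀.symm)

/-- For `p ∈ (1,∞)`, a finite nonzero measure `μ` and `f ∈ L^p(μ)`,
the map `c ↦ ∫ |f − c|^p dμ` attains a unique minimum at some `c₀ ∈ ℝ`, and `c₀` is the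
unique real number satisfying `∫ |f − c₀|^{p−2}·(f − c₀) dμ = 0`. -/
theorem lp_poincare_center_exists_unique {α : Type*} [MeasurableSpace α]
    (μ : Measure α) [IsFiniteMeasure μ] (hμ : μ ≠ 0)
    (p : ℝ) (hp : 1 < p) (f : α → ℝ) (hf : MemLp f (ENNReal.ofReal p) μ) :
    ∃ c₀ : ℝ,
      (∀ c : ℝ, c ≠ c₀ → ∫ x, |f x - c₀| ^ p ∂μ < ∫ x, |f x - c| ^ p ∂μ) ∧
      (∫ x, |f x - c₀| ^ (p - 2) * (f x - c₀) ∂μ = 0) ∧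
      (∀ c : ℝ, (∫ x, |f x - c| ^ (p - 2) * (f x - c) ∂μ = 0) → c = c₀) := by
  obtain ⟨g, hgm, hfg⟩ := hf.1
  have hg : MemLp g (ENNReal.ofReal p) μ := hf.ae_eq hfg
  have e1 : ∀ c : ℝ, ∫ x, |f x - c| ^ p ∂μ = ∫ x, |g x - c| ^ p ∂μ := fun c =>
    integral_congr_ae (hfg.mono fun x hx => by simp only [hx])
  have e2 : ∀ c : ℝ, ∫ x, |f x - c| ^ (p - 2) * (f x - c) ∂μ
      = ∫ x, |g x - c| ^ (p - 2) * (g x - c) ∂μ := fun c =>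
    integral_congr_ae (hfg.mono fun x hx => by simp only [hx])
  obtain ⟨c₀, h1, h2, h3⟩ := aux_main_s8 μ hμ p hp g hgm hg
  exact ⟨c₀, fun c hc => by rw [e1, e1]; exact h1 c hc, by rw [e2]; exact h2,
    fun c hc => h3 c (by rw [← e2]; exact hc)⟩
end
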